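/- arXiv:1408.6703 — 11 statements merged into one kernel-verified Lean document; each statement's English description precedes it below -/
import Mathlib

section
/- Let G be a group generated by involutions ρ₀, ρ₁, ρ₂ with (ρ₀ρ₂)² = 1, and set σ₁ = ρ₀ρ₁, σ₂ = ρ₁ρ₂. If σ₂⁻¹σ₁ = σ₁^i σ₂^j for some integers i, j, then σ₂⁻¹ commutes with σ₁^(i+1). -/
theorem stmt_1 {G : Type*} [Group G] (ρ0 ρ1 ρ2 : G)
    (h0 : ρ0 ^ 2 = 1) (h1 : ρ1 ^ 2 = 1) (h2 : ρ2 ^ 2 = 1)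
    (h02 : (ρ0 * ρ2) ^ 2 = 1)
    (hgen : Subgroup.closure {ρ0, ρ1, ρ2} = ⊤)
    (σ1 σ2 : G) (hσ1 : σ1 = ρ0 * ρ1) (hσ2 : σ2 = ρ1 * ρ2)
    (i j : ℤ) (hrel : σ2⁻¹ * σ1 = σ1 ^ i * σ2 ^ j) :
    σ2⁻¹ * σ1 ^ (i + 1) = σ1 ^ (i + 1) * σ2⁻¹ := by
  have hi0 : ρ0 * ρ0 = 1 := by rw [← sq, h0]
  have hi1 : ρ1 * ρ1 = 1 := by rw [← sq, h1]
  have hi2 : ρ2 * ρ2 = 1 := by rw [← sq, h2]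
  have hinv0 : ρ0⁻¹ = ρ0 := inv_eq_of_mul_eq_one_right hi0
  have hinv1 : ρ1⁻¹ = ρ1 := inv_eq_of_mul_eq_one_right hi1
  have hinv2 : ρ2⁻¹ = ρ2 := inv_eq_of_mul_eq_one_right hi2
  have hc1 : ρ1 * σ1 * ρ1⁻¹ = σ1⁻¹ := by
    rw [hσ1, hinv1, mul_inv_rev, hinv0, hinv1]
    simp [mul_assoc, hi1]
  have hc2 : ρ1 * σ2 * ρ1⁻¹ = σ2⁻¹ := by
    rw [hσ2, hinv1, mul_inv_rev, hinv1, hinv2]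
    simp [← mul_assoc, hi1]
  have hA := congrArg (MulAut.conj ρ1) hrel
  simp only [map_mul, map_zpow, map_inv, MulAut.conj_apply, hc1, hc2, inv_inv] at hA
  -- hA : σ2 * σ1⁻¹ = (σ1⁻¹) ^ i * (σ2⁻¹) ^ j
  have key : σ1 * σ2⁻¹ = σ2 ^ j * σ1 ^ i := by
    have := congrArg (·⁻¹) hA
    simpa [mul_inv_rev, inv_zpow] using this
  have e1 : σ1 ^ (i + 1) = σ1 * σ1 ^ i := by rw [add_comm, zpow_add, zpow_one]
  have e2 : σ1 ^ (i + 1) = σ1 ^ i * σ1 := by rw [zpow_add, zpow_one]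
  calc σ2⁻¹ * σ1 ^ (i + 1) = (σ2⁻¹ * σ1) * σ1 ^ i := by rw [e1, mul_assoc]
    _ = σ1 ^ i * (σ2 ^ j * σ1 ^ i) := by rw [hrel, mul_assoc]
    _ = σ1 ^ i * (σ1 * σ2⁻¹) := by rw [key]
    _ = σ1 ^ (i + 1) * σ2⁻¹ := by rw [e2, mul_assoc]
end

section
/- Let G be a group generated by involutions ρ₀, ρ₁, ρ₂ with (ρ₀ρ₂)² = 1, and set σ₁ = ρ₀ρ₁, σ₂ = ρ₁ρ₂. If σ₂⁻¹σ₁ = σ₁^i σ₂^j, then conjugation by each of ρ₀, ρ₁, ρ₂ inverts σ₁^(i+1); in particular the cyclic subgroup ⟨σ₁^(i+1)⟩ is normal in G. -/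
theorem stmt_2 {G : Type*} [Group G] (ρ0 ρ1 ρ2 : G)
    (h0 : ρ0 ^ 2 = 1) (h1 : ρ1 ^ 2 = 1) (h2 : ρ2 ^ 2 = 1)
    (h02 : (ρ0 * ρ2) ^ 2 = 1)
    (hgen : Subgroup.closure {ρ0, ρ1, ρ2} = ⊤)
    (σ1 σ2 : G) (hσ1 : σ1 = ρ0 * ρ1) (hσ2 : σ2 = ρ1 * ρ2)
    (i j : ℤ) (hrel : σ2⁻¹ * σ1 = σ1 ^ i * σ2 ^ j) :
    (ρ0 * σ1 ^ (i + 1) * ρ0⁻¹ = (σ1 ^ (i + 1))⁻¹ ∧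
     ρ1 * σ1 ^ (i + 1) * ρ1⁻¹ = (σ1 ^ (i + 1))⁻¹ ∧
     ρ2 * σ1 ^ (i + 1) * ρ2⁻¹ = (σ1 ^ (i + 1))⁻¹) ∧
    (Subgroup.zpowers (σ1 ^ (i + 1))).Normal := by
  have sq0 : ρ0 * ρ0 = 1 := by rw [← sq]; exact h0
  have sq1 : ρ1 * ρ1 = 1 := by rw [← sq]; exact h1
  have sq2 : ρ2 * ρ2 = 1 := by rw [← sq]; exact h2
  have inv0 : ρ0⁻¹ = ρ0 := inv_eq_of_mul_eq_one_right sq0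
  have inv1 : ρ1⁻¹ = ρ1 := inv_eq_of_mul_eq_one_right sq1
  have inv2 : ρ2⁻¹ = ρ2 := inv_eq_of_mul_eq_one_right sq2
  -- conjugation of σ1, σ2 by ρ0, ρ1
  have c0 : ρ0 * σ1 * ρ0⁻¹ = σ1⁻¹ := by
    rw [hσ1, mul_inv_rev, inv0, inv1, ← mul_assoc, sq0, one_mul]
  have c1 : ρ1 * σ1 * ρ1⁻¹ = σ1⁻¹ := by
    rw [hσ1, mul_inv_rev, inv0, inv1, mul_assoc, mul_assoc, sq1, mul_one]
  have c1' : ρ1 * σ2 * ρ1⁻¹ = σ2⁻¹ := by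
    rw [hσ2, mul_inv_rev, inv1, inv2, ← mul_assoc, sq1, one_mul]
  -- conjugate hrel by ρ1
  have hconj : σ2 * σ1⁻¹ = σ1 ^ (-i) * σ2 ^ (-j) := by
    have h := congrArg (fun x => ρ1 * x * ρ1⁻¹) hrel
    have l1 : ρ1 * (σ2⁻¹ * σ1) * ρ1⁻¹ = (ρ1 * σ2 * ρ1⁻¹)⁻¹ * (ρ1 * σ1 * ρ1⁻¹) := by group
    have l2 : ρ1 * (σ1 ^ i * σ2 ^ j) * ρ1⁻¹
        = (ρ1 * σ1 * ρ1⁻¹) ^ i * (ρ1 * σ2 * ρ1⁻¹) ^ j := by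
      rw [conj_zpow, conj_zpow]; group
    rw [l1, l2, c1, c1', inv_inv] at h
    rw [h, inv_zpow, inv_zpow, ← zpow_neg, ← zpow_neg]
  -- σ2 commutes with σ1 ^ (i+1)
  have e1 : σ1 ^ i * σ2 * σ1⁻¹ = σ2 ^ (-j) := by
    rw [mul_assoc, hconj, ← mul_assoc, ← zpow_add]
    simp
  have e2 : σ1⁻¹ * σ2 * σ1 ^ i = σ2 ^ (-j) := by
    have h' : σ1⁻¹ * σ2 = σ2 ^ (-j) * σ1 ^ (-i) := by
      have h := congrArg (·⁻¹) hrel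
      simpa [mul_inv_rev, zpow_neg] using h
    rw [h', mul_assoc, ← zpow_add]
    simp
  have key : σ1 ^ i * σ2 * σ1⁻¹ = σ1⁻¹ * σ2 * σ1 ^ i := e1.trans e2.symm
  have hcomm : σ1 ^ (i + 1) * σ2 = σ2 * σ1 ^ (i + 1) := by
    calc σ1 ^ (i + 1) * σ2 = σ1 * (σ1 ^ i * σ2 * σ1⁻¹) * σ1 := by group
      _ = σ1 * (σ1⁻¹ * σ2 * σ1 ^ i) * σ1 := by rw [key]
      _ = σ2 * σ1 ^ (i + 1) := by group
  -- the three conjugation facts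
  have p0 : ρ0 * σ1 ^ (i + 1) * ρ0⁻¹ = (σ1 ^ (i + 1))⁻¹ := by
    rw [← conj_zpow, c0, inv_zpow]
  have p1 : ρ1 * σ1 ^ (i + 1) * ρ1⁻¹ = (σ1 ^ (i + 1))⁻¹ := by
    rw [← conj_zpow, c1, inv_zpow]
  have hρ2 : ρ2 = ρ1 * σ2 := by rw [hσ2, ← mul_assoc, sq1, one_mul]
  have hfix : σ2 * σ1 ^ (i + 1) * σ2⁻¹ = σ1 ^ (i + 1) := by
    rw [← hcomm]; group
  have p2 : ρ2 * σ1 ^ (i + 1) * ρ2⁻¹ = (σ1 ^ (i + 1))⁻¹ := by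
    rw [hρ2]
    calc (ρ1 * σ2) * σ1 ^ (i + 1) * (ρ1 * σ2)⁻¹
        = ρ1 * (σ2 * σ1 ^ (i + 1) * σ2⁻¹) * ρ1⁻¹ := by group
      _ = ρ1 * σ1 ^ (i + 1) * ρ1⁻¹ := by rw [hfix]
      _ = (σ1 ^ (i + 1))⁻¹ := p1
  refine ⟨⟨p0, p1, p2⟩, ?_⟩
  -- normality
  set t := σ1 ^ (i + 1) with ht
  have mem : ∀ g : G, g * t * g⁻¹ = t⁻¹ →
      g ∈ Subgroup.normalizer (Subgroup.zpowers t : Set G) := by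
    intro g hg
    rw [Subgroup.mem_normalizer_iff]
    intro h
    constructor
    · intro hh
      obtain ⟨k, hk⟩ := Subgroup.mem_zpowers_iff.mp hh
      refine Subgroup.mem_zpowers_iff.mpr ⟨-k, ?_⟩
      rw [← hk, ← conj_zpow, hg]
      group
    · intro hh
      obtain ⟨k, hk⟩ := Subgroup.mem_zpowers_iff.mp hh
      have hg' : g⁻¹ * t * g = t⁻¹ := by
        have h1 : g⁻¹ * t⁻¹ * g = t := by rw [← hg]; group
        calc g⁻¹ * t * g = (g⁻¹ * t⁻¹ * g)⁻¹ := by group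
          _ = t⁻¹ := by rw [h1]
      refine Subgroup.mem_zpowers_iff.mpr ⟨-k, ?_⟩
      have hh2 : h = g⁻¹ * t ^ k * g := by rw [hk]; group
      rw [hh2]
      calc t ^ (-k) = (t⁻¹) ^ k := by group
        _ = (g⁻¹ * t * g⁻¹⁻¹) ^ k := by rw [inv_inv, hg']
        _ = g⁻¹ * t ^ k * g⁻¹⁻¹ := conj_zpow ..
        _ = g⁻¹ * t ^ k * g := by rw [inv_inv]
  have hle : Subgroup.closure {ρ0, ρ1, ρ2} ≤ Subgroup.normalizer (Subgroup.zpowers t : Set G) := by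
    rw [Subgroup.closure_le]
    rintro x hx
    simp only [Set.mem_insert_iff, Set.mem_singleton_iff] at hx
    rcases hx with rfl | rfl | rfl
    · exact mem _ p0
    · exact mem _ p1
    · exact mem _ p2
  have htop : Subgroup.normalizer (Subgroup.zpowers t : Set G) = ⊤ :=
    top_le_iff.mp (hgen ▸ hle)
  exact Subgroup.normalizer_eq_top_iff.mp htop
end

section
/- Let G be a group generated by involutions ρ₀, ρ₁, ρ₂ with (ρ₀ρ₂)² = 1, and set σ₁ = ρ₀ρ₁, σ₂ = ρ₁ρ₂. If σ₂⁻¹σ₁ = σ₁^i σ₂^j, then ⟨σ₂^(j-1)⟩ is a normal subgroup of G. -/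
private lemma conj_zpow_eq {G : Type*} [Group G] (g s : G)
    (h : g * s * g⁻¹ = s⁻¹) (k : ℤ) : g * s ^ k * g⁻¹ = s ^ (-k) := by
  rw [zpow_neg, ← inv_zpow, ← h, conj_zpow]

private lemma conj_inv_mem_normalizer {G : Type*} [Group G] {g s : G}
    (h : g * s * g⁻¹ = s⁻¹) : g ∈ Subgroup.normalizer (Subgroup.zpowers s : Set G) := by
  rw [Subgroup.mem_normalizer_iff]
  intro x
  constructor
  · intro hx
    obtain ⟨k, hk⟩ := Subgroup.mem_zpowers_iff.mp hx
    rw [← hk]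
    exact Subgroup.mem_zpowers_iff.mpr ⟨-k, (conj_zpow_eq g s h k).symm⟩
  · intro hx
    obtain ⟨k, hk⟩ := Subgroup.mem_zpowers_iff.mp hx
    have e : g * s ^ (-k) * g⁻¹ = s ^ k := by rw [conj_zpow_eq g s h (-k), neg_neg]
    refine Subgroup.mem_zpowers_iff.mpr ⟨-k, ?_⟩
    have hx' : x = g⁻¹ * s ^ k * g := by rw [hk]; group
    rw [hx', ← e]; group

theorem stmt_3 {G : Type*} [Group G] (ρ0 ρ1 ρ2 : G)
    (h0 : ρ0 ^ 2 = 1) (h1 : ρ1 ^ 2 = 1) (h2 : ρ2 ^ 2 = 1)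
    (h02 : (ρ0 * ρ2) ^ 2 = 1)
    (hgen : Subgroup.closure {ρ0, ρ1, ρ2} = ⊤)
    (σ1 σ2 : G) (hσ1 : σ1 = ρ0 * ρ1) (hσ2 : σ2 = ρ1 * ρ2)
    (i j : ℤ) (hrel : σ2⁻¹ * σ1 = σ1 ^ i * σ2 ^ j) :
    (Subgroup.zpowers (σ2 ^ (j - 1))).Normal := by
  have m0 : ρ0 * ρ0 = 1 := by rw [← sq]; exact h0
  have m1 : ρ1 * ρ1 = 1 := by rw [← sq]; exact h1
  have m2 : ρ2 * ρ2 = 1 := by rw [← sq]; exact h2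
  have inv0 : ρ0⁻¹ = ρ0 := inv_eq_of_mul_eq_one_right m0
  have inv1 : ρ1⁻¹ = ρ1 := inv_eq_of_mul_eq_one_right m1
  have inv2 : ρ2⁻¹ = ρ2 := inv_eq_of_mul_eq_one_right m2
  have m1' : ∀ x : G, ρ1 * (ρ1 * x) = x := fun x => by rw [← mul_assoc, m1, one_mul]
  have m2' : ∀ x : G, ρ2 * (ρ2 * x) = x := fun x => by rw [← mul_assoc, m2, one_mul]
  -- conjugation of σ1, σ2 by ρ1 (and σ2 by ρ2) inverts them
  have c1 : ρ1 * σ1 * ρ1⁻¹ = σ1⁻¹ := by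
    rw [hσ1, inv1, mul_inv_rev, inv0, inv1]
    simp [mul_assoc, m0, m1, m2, m1', m2']
  have c2 : ρ1 * σ2 * ρ1⁻¹ = σ2⁻¹ := by
    rw [hσ2, inv1, mul_inv_rev, inv1, inv2]
    simp [mul_assoc, m0, m1, m2, m1', m2']
  have c2' : ρ2 * σ2 * ρ2⁻¹ = σ2⁻¹ := by
    rw [hσ2, inv2, mul_inv_rev, inv1, inv2]
    simp [mul_assoc, m0, m1, m2, m1', m2']
  -- the relation conjugated by ρ1
  have hrel2 : σ1 * σ2⁻¹ = σ2 ^ j * σ1 ^ i := by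
    have step := congrArg (fun y => ρ1 * y * ρ1⁻¹) hrel
    have lhs : ρ1 * (σ2⁻¹ * σ1) * ρ1⁻¹ = (ρ1 * σ2 * ρ1⁻¹)⁻¹ * (ρ1 * σ1 * ρ1⁻¹) := by group
    have rhs : ρ1 * (σ1 ^ i * σ2 ^ j) * ρ1⁻¹
        = (ρ1 * σ1 * ρ1⁻¹) ^ i * (ρ1 * σ2 * ρ1⁻¹) ^ j := by
      rw [conj_zpow, conj_zpow]; group
    rw [lhs, rhs, c1, c2] at step
    have := congrArg (fun y => y⁻¹) step
    simpa [mul_inv_rev] using this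
  -- σ1 commutes with σ2 ^ (j - 1)
  have hA : σ2⁻¹ * σ1 * (σ2 ^ j)⁻¹ = σ1 ^ i := by rw [hrel]; group
  have hcomm : σ1 * σ2 ^ (j - 1) = σ2 ^ (j - 1) * σ1 := by
    calc σ1 * σ2 ^ (j - 1) = σ1 * σ2⁻¹ * σ2 ^ j := by group
      _ = σ2 ^ j * σ1 ^ i * σ2 ^ j := by rw [hrel2]
      _ = σ2 ^ j * (σ2⁻¹ * σ1 * (σ2 ^ j)⁻¹) * σ2 ^ j := by rw [hA]
      _ = σ2 ^ (j - 1) * σ1 := by group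
  set s := σ2 ^ (j - 1) with hs
  -- each generator conjugates s to s⁻¹
  have k1 : ρ1 * s * ρ1⁻¹ = s⁻¹ := by rw [hs, ← conj_zpow, c2, inv_zpow]
  have k2 : ρ2 * s * ρ2⁻¹ = s⁻¹ := by rw [hs, ← conj_zpow, c2', inv_zpow]
  have hρ0 : ρ0 = σ1 * ρ1 := by rw [hσ1, mul_assoc, m1, mul_one]
  have hcomm' : σ1 * s⁻¹ = s⁻¹ * σ1 := (Commute.inv_right hcomm : Commute σ1 s⁻¹)
  have k0 : ρ0 * s * ρ0⁻¹ = s⁻¹ := by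
    calc ρ0 * s * ρ0⁻¹ = σ1 * (ρ1 * s * ρ1⁻¹) * σ1⁻¹ := by rw [hρ0]; group
      _ = σ1 * s⁻¹ * σ1⁻¹ := by rw [k1]
      _ = s⁻¹ * σ1 * σ1⁻¹ := by rw [hcomm']
      _ = s⁻¹ := by group
  -- conclude normality via the normalizer
  rw [← Subgroup.normalizer_eq_top_iff, ← top_le_iff, ← hgen, Subgroup.closure_le]
  rintro x hx
  simp only [Set.mem_insert_iff, Set.mem_singleton_iff] at hx
  rcases hx with rfl | rfl | rfl
  · exact conj_inv_mem_normalizer k0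
  · exact conj_inv_mem_normalizer k1
  · exact conj_inv_mem_normalizer k2
end

section
/- Let G be a group generated by involutions ρ₀, ρ₁, ρ₂ with (ρ₀ρ₂)² = 1, and set σ₁ = ρ₀ρ₁, σ₂ = ρ₁ρ₂. If σ₂⁻¹σ₁ = σ₁^i ρ₁ σ₂^j, then σ₂ σ₁^(i-2) σ₂⁻¹ = σ₁^(2-i); in particular ⟨σ₁^(i-2)⟩ is normal in G. -/
theorem stmt_4 {G : Type*} [Group G] (ρ0 ρ1 ρ2 : G)
    (h0 : ρ0 ^ 2 = 1) (h1 : ρ1 ^ 2 = 1) (h2 : ρ2 ^ 2 = 1)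
    (h02 : (ρ0 * ρ2) ^ 2 = 1)
    (hgen : Subgroup.closure {ρ0, ρ1, ρ2} = ⊤)
    (σ1 σ2 : G) (hσ1 : σ1 = ρ0 * ρ1) (hσ2 : σ2 = ρ1 * ρ2)
    (i j : ℤ) (hrel : σ2⁻¹ * σ1 = σ1 ^ i * ρ1 * σ2 ^ j) :
    σ2 * σ1 ^ (i - 2) * σ2⁻¹ = σ1 ^ (2 - i) ∧
    (Subgroup.zpowers (σ1 ^ (i - 2))).Normal := by
  have h0' : ρ0 * ρ0 = 1 := by rw [← sq]; exact h0
  have h1' : ρ1 * ρ1 = 1 := by rw [← sq]; exact h1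
  have h2' : ρ2 * ρ2 = 1 := by rw [← sq]; exact h2
  have hi0 : ρ0⁻¹ = ρ0 := inv_eq_of_mul_eq_one_right h0'
  have hi1 : ρ1⁻¹ = ρ1 := inv_eq_of_mul_eq_one_right h1'
  have hi2 : ρ2⁻¹ = ρ2 := inv_eq_of_mul_eq_one_right h2'
  have hcomm : ρ0 * ρ2 = ρ2 * ρ0 := by
    have h02' : (ρ0 * ρ2) * (ρ0 * ρ2) = 1 := by rw [← sq]; exact h02
    have : (ρ0 * ρ2)⁻¹ = ρ0 * ρ2 := inv_eq_of_mul_eq_one_right h02'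
    rw [mul_inv_rev, hi0, hi2] at this
    exact this.symm
  -- basic conjugation lemmas
  have hbab : σ2 * σ1 * σ2 = σ1⁻¹ := by
    rw [hσ1, hσ2, mul_inv_rev, hi0, hi1]
    calc ρ1 * ρ2 * (ρ0 * ρ1) * (ρ1 * ρ2)
        = ρ1 * (ρ2 * ρ0) * (ρ1 * ρ1) * ρ2 := by group
      _ = ρ1 * (ρ0 * ρ2) * ρ2 := by rw [h1', mul_one, hcomm]
      _ = ρ1 * ρ0 * (ρ2 * ρ2) := by group
      _ = ρ1 * ρ0 := by rw [h2', mul_one]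
  have hr1σ1 : ρ1 * σ1 * ρ1 = σ1⁻¹ := by
    rw [hσ1, mul_inv_rev, hi0, hi1]
    calc ρ1 * (ρ0 * ρ1) * ρ1 = ρ1 * ρ0 * (ρ1 * ρ1) := by group
      _ = ρ1 * ρ0 := by rw [h1', mul_one]
  have hr1σ2 : ρ1 * σ2 * ρ1 = σ2⁻¹ := by
    rw [hσ2, mul_inv_rev, hi1, hi2]
    calc ρ1 * (ρ1 * ρ2) * ρ1 = (ρ1 * ρ1) * ρ2 * ρ1 := by group
      _ = ρ2 * ρ1 := by rw [h1', one_mul]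
  have hr0σ1 : ρ0 * σ1 * ρ0 = σ1⁻¹ := by
    rw [hσ1, mul_inv_rev, hi0, hi1]
    calc ρ0 * (ρ0 * ρ1) * ρ0 = (ρ0 * ρ0) * (ρ1 * ρ0) := by group
      _ = ρ1 * ρ0 := by rw [h0', one_mul]
  -- conjugation of powers
  have conj1 : ∀ n : ℤ, ρ1 * σ1 ^ n * ρ1 = σ1 ^ (-n) := by
    intro n
    have := (conj_zpow (i := n) (a := ρ1) (b := σ1)).symm
    rw [hi1] at this
    rw [this, hr1σ1]; group
  have conj0 : ∀ n : ℤ, ρ0 * σ1 ^ n * ρ0 = σ1 ^ (-n) := by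
    intro n
    have := (conj_zpow (i := n) (a := ρ0) (b := σ1)).symm
    rw [hi0] at this
    rw [this, hr0σ1]; group
  have conj2 : ∀ n : ℤ, ρ1 * σ2 ^ n * ρ1 = σ2 ^ (-n) := by
    intro n
    have := (conj_zpow (i := n) (a := ρ1) (b := σ2)).symm
    rw [hi1] at this
    rw [this, hr1σ2]; group
  -- key identity
  have e1 : σ1 ^ (-i) * σ2⁻¹ * σ1 = ρ1 * σ2 ^ j := by
    rw [mul_assoc, hrel]; group
  have e2 : (ρ1 * σ2 ^ j) * (ρ1 * σ2 ^ j) = 1 := by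
    calc (ρ1 * σ2 ^ j) * (ρ1 * σ2 ^ j) = (ρ1 * σ2 ^ j * ρ1) * σ2 ^ j := by group
      _ = σ2 ^ (-j) * σ2 ^ j := by rw [conj2]
      _ = 1 := by group
  have key : (σ1 ^ (-i) * σ2⁻¹ * σ1) * (σ1 ^ (-i) * σ2⁻¹ * σ1) = 1 := by
    rw [e1]; exact e2
  have hK : σ2⁻¹ * σ1 ^ (1 - i) * σ2⁻¹ = σ1 ^ (i - 1) := by
    have h := congrArg (fun y => σ1 ^ i * y * σ1⁻¹) key
    calc σ2⁻¹ * σ1 ^ (1 - i) * σ2⁻¹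
        = σ1 ^ i * ((σ1 ^ (-i) * σ2⁻¹ * σ1) * (σ1 ^ (-i) * σ2⁻¹ * σ1)) * σ1⁻¹ := by group
      _ = σ1 ^ i * 1 * σ1⁻¹ := h
      _ = σ1 ^ (i - 1) := by group
  have part1 : σ2 * σ1 ^ (i - 2) * σ2⁻¹ = σ1 ^ (2 - i) := by
    have hK' : σ2 * σ1 ^ (i - 1) * σ2 = σ1 ^ (1 - i) := by
      rw [← hK]; group
    have hinvbab : σ2⁻¹ * σ1⁻¹ * σ2⁻¹ = σ1 := by
      have := congrArg (fun y => y⁻¹) hbab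
      simp only [mul_inv_rev, inv_inv] at this
      calc σ2⁻¹ * σ1⁻¹ * σ2⁻¹ = σ2⁻¹ * (σ1⁻¹ * σ2⁻¹) := by group
        _ = σ1 := this
    calc σ2 * σ1 ^ (i - 2) * σ2⁻¹
        = (σ2 * σ1 ^ (i - 1) * σ2) * (σ2⁻¹ * σ1⁻¹ * σ2⁻¹) := by group
      _ = σ1 ^ (1 - i) * σ1 := by rw [hK', hinvbab]
      _ = σ1 ^ (2 - i) := by group
  refine ⟨part1, ?_⟩
  -- normality
  set x : G := σ1 ^ (i - 2) with hx
  have hxinv : x⁻¹ = σ1 ^ (2 - i) := by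
    rw [hx, ← zpow_neg]; ring_nf
  have conjρ0 : ρ0 * x * ρ0⁻¹ = x⁻¹ := by
    rw [hi0, hxinv, hx, conj0]; ring_nf
  have conjρ1 : ρ1 * x * ρ1⁻¹ = x⁻¹ := by
    rw [hi1, hxinv, hx, conj1]; ring_nf
  have conjρ2 : ρ2 * x * ρ2⁻¹ = x := by
    have hρ2 : ρ2 = ρ1 * σ2 := by rw [hσ2, ← mul_assoc, h1', one_mul]
    have hb : σ2 * x * σ2⁻¹ = x⁻¹ := by rw [hx, hxinv]; exact part1
    calc ρ2 * x * ρ2⁻¹ = ρ1 * (σ2 * x * σ2⁻¹) * ρ1⁻¹ := by rw [hρ2]; group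
      _ = ρ1 * x⁻¹ * ρ1 := by rw [hb, hi1]
      _ = x := by rw [hxinv, conj1, hx]; ring_nf
  have main : ∀ g : G, g * x * g⁻¹ = x ∨ g * x * g⁻¹ = x⁻¹ := by
    intro g
    have hg : g ∈ Subgroup.closure ({ρ0, ρ1, ρ2} : Set G) := by
      rw [hgen]; trivial
    induction hg using Subgroup.closure_induction with
    | mem y hy =>
      rcases hy with rfl | rfl | rfl
      · right; exact conjρ0
      · right; exact conjρ1
      · left; exact conjρ2
    | one => left; group
    | mul a b ha hb iha ihb =>
      have step : a * (b * x * b⁻¹) * a⁻¹ = (a * b) * x * (a * b)⁻¹ := by group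
      rcases ihb with hb' | hb' <;> rcases iha with ha' | ha'
      · left; rw [← step, hb', ha']
      · right; rw [← step, hb', ha']
      · right; rw [← step, hb']
        have : a * x⁻¹ * a⁻¹ = (a * x * a⁻¹)⁻¹ := by group
        rw [this, ha']
      · left; rw [← step, hb']
        have : a * x⁻¹ * a⁻¹ = (a * x * a⁻¹)⁻¹ := by group
        rw [this, ha', inv_inv]
    | inv a ha iha =>
      rcases iha with ha' | ha'
      · left
        conv_lhs => rw [← ha']
        group
      · right
        conv_lhs => rw [show x = (x⁻¹)⁻¹ by group, ← ha']
        group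
  constructor
  intro n hn g
  rw [Subgroup.mem_zpowers_iff] at hn
  obtain ⟨k, rfl⟩ := hn
  have : g * x ^ k * g⁻¹ = (g * x * g⁻¹) ^ k := conj_zpow.symm
  rw [this]
  rcases main g with h | h
  · rw [h]; exact Subgroup.zpow_mem_zpowers x k
  · rw [h, ← zpow_neg_one, ← zpow_mul]
    exact Subgroup.zpow_mem_zpowers x _
end

section
/- Let G be a group generated by involutions ρ₀, ρ₁, ρ₂ with (ρ₀ρ₂)² = 1, and set σ₁ = ρ₀ρ₁, σ₂ = ρ₁ρ₂. If σ₂⁻¹σ₁ = σ₁^i ρ₁ σ₂^j, then σ₁ σ₂^(j+2) σ₁⁻¹ = σ₂^(-(j+2)); in particular ⟨σ₂^(j+2)⟩ is normal in G. -/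
private lemma conj_mem_zpowers_aux {G : Type*} [Group G] (g z : G)
    (h : g * z * g⁻¹ = z ∨ g * z * g⁻¹ = z⁻¹) (k : ℤ) :
    g * z ^ k * g⁻¹ ∈ Subgroup.zpowers z := by
  rcases h with h | h
  · exact ⟨k, by rw [← conj_zpow, h]⟩
  · exact ⟨-k, by rw [← conj_zpow, h]; group⟩

private lemma mem_normalizer_zpowers_aux {G : Type*} [Group G] (g z : G)
    (h : g * z * g⁻¹ = z ∨ g * z * g⁻¹ = z⁻¹) :
    g ∈ Subgroup.normalizer (Subgroup.zpowers z : Set G) := by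
  have h' : g⁻¹ * z * g⁻¹⁻¹ = z ∨ g⁻¹ * z * g⁻¹⁻¹ = z⁻¹ := by
    rcases h with h | h
    · left
      rw [inv_inv]
      conv_lhs => rw [← h]
      group
    · right
      rw [inv_inv]
      have h2 : g * z⁻¹ * g⁻¹ = z := by
        conv_rhs => rw [← inv_inv z, ← h]
        group
      conv_lhs => rw [← h2]
      group
  rw [Subgroup.mem_normalizer_iff]
  intro x
  constructor
  · rintro ⟨k, rfl⟩
    exact conj_mem_zpowers_aux g z h k
  · rintro ⟨k, hk⟩
    have hk' : z ^ k = g * x * g⁻¹ := hk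
    have hx : x = g⁻¹ * z ^ k * g⁻¹⁻¹ := by rw [inv_inv, hk']; group
    rw [hx]
    exact conj_mem_zpowers_aux g⁻¹ z h' k

theorem stmt_5 {G : Type*} [Group G] (ρ0 ρ1 ρ2 : G)
    (h0 : ρ0 ^ 2 = 1) (h1 : ρ1 ^ 2 = 1) (h2 : ρ2 ^ 2 = 1)
    (h02 : (ρ0 * ρ2) ^ 2 = 1)
    (hgen : Subgroup.closure {ρ0, ρ1, ρ2} = ⊤)
    (σ1 σ2 : G) (hσ1 : σ1 = ρ0 * ρ1) (hσ2 : σ2 = ρ1 * ρ2)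
    (i j : ℤ) (hrel : σ2⁻¹ * σ1 = σ1 ^ i * ρ1 * σ2 ^ j) :
    σ1 * σ2 ^ (j + 2) * σ1⁻¹ = σ2 ^ (-(j + 2)) ∧
    (Subgroup.zpowers (σ2 ^ (j + 2))).Normal := by
  rw [pow_two] at h0 h1 h2 h02
  have hinv0 : ρ0⁻¹ = ρ0 := inv_eq_of_mul_eq_one_right h0
  have hinv1 : ρ1⁻¹ = ρ1 := inv_eq_of_mul_eq_one_right h1
  have hinv2 : ρ2⁻¹ = ρ2 := inv_eq_of_mul_eq_one_right h2
  -- (σ1 σ2)^2 = 1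
  have hab : σ1 * σ2 * (σ1 * σ2) = 1 := by
    have hss : σ1 * σ2 = ρ0 * ρ2 := by
      rw [hσ1, hσ2, mul_assoc, ← mul_assoc ρ1 ρ1 ρ2, h1, one_mul]
    rw [hss]; exact h02
  -- conjugation by ρ1 inverts σ1 and σ2
  have hc1 : ρ1 * σ1 * ρ1⁻¹ = σ1⁻¹ := by
    rw [hσ1, hinv1, mul_inv_rev, hinv0, hinv1]
    calc ρ1 * (ρ0 * ρ1) * ρ1 = ρ1 * ρ0 * (ρ1 * ρ1) := by group
      _ = ρ1 * ρ0 := by rw [h1, mul_one]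
  have hc2 : ρ1 * σ2 * ρ1⁻¹ = σ2⁻¹ := by
    rw [hσ2, hinv1, mul_inv_rev, hinv1, hinv2]
    calc ρ1 * (ρ1 * ρ2) * ρ1 = (ρ1 * ρ1) * (ρ2 * ρ1) := by group
      _ = ρ2 * ρ1 := by rw [h1, one_mul]
  have hc2' : ρ2 * σ2 * ρ2⁻¹ = σ2⁻¹ := by
    rw [hσ2, hinv2, mul_inv_rev, hinv1, hinv2]
    calc ρ2 * (ρ1 * ρ2) * ρ2 = ρ2 * ρ1 * (ρ2 * ρ2) := by group
      _ = ρ2 * ρ1 := by rw [h2, mul_one]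
  -- ρ1 conjugation on powers of σ1
  have hkey : ρ1 * σ1 ^ (-i) * ρ1⁻¹ = σ1 ^ i := by
    calc ρ1 * σ1 ^ (-i) * ρ1⁻¹ = (ρ1 * σ1 * ρ1⁻¹) ^ (-i) := conj_zpow.symm
      _ = (σ1⁻¹) ^ (-i) := by rw [hc1]
      _ = σ1 ^ i := by group
  -- express σ2^j from the relation
  have hbj : σ2 ^ j = ρ1 * (σ1 ^ (-i) * (σ2⁻¹ * σ1)) := by
    rw [hrel]
    have e : ρ1 * (σ1 ^ (-i) * (σ1 ^ i * ρ1 * σ2 ^ j)) = ρ1 * ρ1 * σ2 ^ j := by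
      group
    rw [e, h1, one_mul]
  -- the involution s = σ2^(j+1) * σ1⁻¹
  have hs : σ2 ^ (j + 1) * σ1⁻¹ = σ2 * (ρ1 * (σ1 ^ (-i) * σ2⁻¹)) := by
    rw [show (j : ℤ) + 1 = 1 + j by ring, zpow_add, zpow_one, hbj]
    group
  have hs2 : (σ2 ^ (j + 1) * σ1⁻¹) * (σ2 ^ (j + 1) * σ1⁻¹) = 1 := by
    rw [hs]
    have e : σ2 * (ρ1 * (σ1 ^ (-i) * σ2⁻¹)) * (σ2 * (ρ1 * (σ1 ^ (-i) * σ2⁻¹)))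
        = σ2 * ((ρ1 * σ1 ^ (-i) * ρ1⁻¹) * σ1 ^ (-i)) * σ2⁻¹ := by
      rw [hinv1]; group
    rw [e, hkey, ← zpow_add]
    simp
  have hmain : σ2 ^ (j + 1) * σ1⁻¹ * σ2 ^ (j + 1) = σ1 := by
    calc σ2 ^ (j + 1) * σ1⁻¹ * σ2 ^ (j + 1)
        = (σ2 ^ (j + 1) * σ1⁻¹ * (σ2 ^ (j + 1) * σ1⁻¹)) * σ1 := by group
      _ = σ1 := by rw [hs2, one_mul]
  -- first conclusion
  have goal1 : σ1 * σ2 ^ (j + 2) * σ1⁻¹ = σ2 ^ (-(j + 2)) := by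
    have e1 : σ2 ^ (j + 2) = σ2 * σ2 ^ (j + 1) := by
      rw [show (j : ℤ) + 2 = 1 + (j + 1) by ring, zpow_add, zpow_one]
    have key : σ1 * σ2 ^ (j + 2) * σ1⁻¹ * σ2 ^ (j + 2) = 1 := by
      rw [e1]
      calc σ1 * (σ2 * σ2 ^ (j + 1)) * σ1⁻¹ * (σ2 * σ2 ^ (j + 1))
          = σ1 * σ2 * (σ2 ^ (j + 1) * σ1⁻¹ * σ2 ^ (j + 1)) * σ2 := by group
        _ = σ1 * σ2 * (σ1 * σ2) := by rw [hmain]; group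
        _ = 1 := hab
    rw [zpow_neg]
    exact eq_inv_of_mul_eq_one_left key
  refine ⟨goal1, ?_⟩
  -- normality
  have hρ1 : ρ1 * σ2 ^ (j + 2) * ρ1⁻¹ = (σ2 ^ (j + 2))⁻¹ := by
    calc ρ1 * σ2 ^ (j + 2) * ρ1⁻¹ = (ρ1 * σ2 * ρ1⁻¹) ^ (j + 2) := conj_zpow.symm
      _ = (σ2⁻¹) ^ (j + 2) := by rw [hc2]
      _ = (σ2 ^ (j + 2))⁻¹ := inv_zpow σ2 (j + 2)
  have hρ2 : ρ2 * σ2 ^ (j + 2) * ρ2⁻¹ = (σ2 ^ (j + 2))⁻¹ := by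
    calc ρ2 * σ2 ^ (j + 2) * ρ2⁻¹ = (ρ2 * σ2 * ρ2⁻¹) ^ (j + 2) := conj_zpow.symm
      _ = (σ2⁻¹) ^ (j + 2) := by rw [hc2']
      _ = (σ2 ^ (j + 2))⁻¹ := inv_zpow σ2 (j + 2)
  have hσ1z : σ1 * σ2 ^ (j + 2) * σ1⁻¹ = (σ2 ^ (j + 2))⁻¹ := by
    rw [goal1, zpow_neg]
  have hρ0 : ρ0 * σ2 ^ (j + 2) * ρ0⁻¹ = σ2 ^ (j + 2) := by
    have hρ0e : ρ0 = σ1 * ρ1 := by rw [hσ1, mul_assoc, h1, mul_one]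
    have e : ρ0 * σ2 ^ (j + 2) * ρ0⁻¹ = σ1 * (ρ1 * σ2 ^ (j + 2) * ρ1⁻¹) * σ1⁻¹ := by
      rw [hρ0e]; group
    rw [e, hρ1]
    have e2 : σ1 * (σ2 ^ (j + 2))⁻¹ * σ1⁻¹ = (σ1 * σ2 ^ (j + 2) * σ1⁻¹)⁻¹ := by group
    rw [e2, hσ1z, inv_inv]
  have hnorm : Subgroup.closure {ρ0, ρ1, ρ2}
      ≤ Subgroup.normalizer (Subgroup.zpowers (σ2 ^ (j + 2)) : Set G) := by
    rw [Subgroup.closure_le]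
    rintro x (rfl | rfl | rfl)
    · exact mem_normalizer_zpowers_aux _ _ (Or.inl hρ0)
    · exact mem_normalizer_zpowers_aux _ _ (Or.inr hρ1)
    · exact mem_normalizer_zpowers_aux _ _ (Or.inr hρ2)
  rw [← Subgroup.normalizer_eq_top_iff]
  rw [hgen] at hnorm
  exact top_le_iff.mp hnorm
end

section
/- Let G be a group generated by involutions ρ₀, ρ₁, ρ₂ with (ρ₀ρ₂)² = 1, σ₁ = ρ₀ρ₁, σ₂ = ρ₁ρ₂. Suppose G satisfies σ₂⁻¹σ₁ = σ₁^i ρ₁ σ₂^j and σ₂⁻²σ₁ = σ₁^a σ₂^b. Then σ₂⁻¹σ₁² = σ₁^(i-a) ρ₁ σ₂^(b-j-2). -/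
theorem stmt_6 {G : Type*} [Group G] (ρ0 ρ1 ρ2 : G)
    (h0 : ρ0 ^ 2 = 1) (h1 : ρ1 ^ 2 = 1) (h2 : ρ2 ^ 2 = 1)
    (h02 : (ρ0 * ρ2) ^ 2 = 1)
    (hgen : Subgroup.closure {ρ0, ρ1, ρ2} = ⊤)
    (σ1 σ2 : G) (hσ1 : σ1 = ρ0 * ρ1) (hσ2 : σ2 = ρ1 * ρ2)
    (i j a b : ℤ)
    (hrel1 : σ2⁻¹ * σ1 = σ1 ^ i * ρ1 * σ2 ^ j)
    (hrel2 : σ2⁻¹ ^ 2 * σ1 = σ1 ^ a * σ2 ^ b) :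
    σ2⁻¹ * σ1 ^ 2 = σ1 ^ (i - a) * ρ1 * σ2 ^ (b - j - 2) := by
  have h0' : ρ0 * ρ0 = 1 := by rw [← sq]; exact h0
  have h1' : ρ1 * ρ1 = 1 := by rw [← sq]; exact h1
  have h2' : ρ2 * ρ2 = 1 := by rw [← sq]; exact h2
  have hinv1 : ρ1⁻¹ = ρ1 := inv_eq_of_mul_eq_one_left h1'
  have hinv2 : ρ2⁻¹ = ρ2 := inv_eq_of_mul_eq_one_left h2'
  have hinv0 : ρ0⁻¹ = ρ0 := inv_eq_of_mul_eq_one_left h0'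
  -- conjugation by ρ1 inverts σ2
  have hc2 : ρ1 * σ2 * ρ1⁻¹ = σ2⁻¹ := by
    rw [hinv1, hσ2, mul_inv_rev, hinv1, hinv2]
    calc ρ1 * (ρ1 * ρ2) * ρ1 = (ρ1 * ρ1) * (ρ2 * ρ1) := by group
      _ = ρ2 * ρ1 := by rw [h1', one_mul]
  -- conjugation by ρ1 inverts σ1
  have hc1 : ρ1 * σ1 * ρ1⁻¹ = σ1⁻¹ := by
    rw [hinv1, hσ1, mul_inv_rev, hinv1, hinv0]
    calc ρ1 * (ρ0 * ρ1) * ρ1 = (ρ1 * ρ0) * (ρ1 * ρ1) := by group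
      _ = ρ1 * ρ0 := by rw [h1', mul_one]
  -- generic zpow commuting
  have gen : ∀ x : G, ρ1 * x * ρ1⁻¹ = x⁻¹ → ∀ n : ℤ, ρ1 * x ^ n = x ^ (-n) * ρ1 := by
    intro x hx n
    have h := map_zpow (MulAut.conj ρ1) x n
    simp only [MulAut.conj_apply] at h
    rw [hx] at h
    calc ρ1 * x ^ n = (ρ1 * x ^ n * ρ1⁻¹) * ρ1 := by group
      _ = (x⁻¹) ^ n * ρ1 := by rw [h]
      _ = x ^ (-n) * ρ1 := by group
  have L1 : ∀ n : ℤ, ρ1 * σ2 ^ n = σ2 ^ (-n) * ρ1 := gen σ2 hc2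
  have L2 : ∀ n : ℤ, ρ1 * σ1 ^ n = σ1 ^ (-n) * ρ1 := gen σ1 hc1
  have L1' : ∀ n : ℤ, σ2 ^ n * ρ1 = ρ1 * σ2 ^ (-n) := by
    intro n; rw [L1 (-n), neg_neg]
  have L2' : ∀ n : ℤ, σ1 ^ n * ρ1 = ρ1 * σ1 ^ (-n) := by
    intro n; rw [L2 (-n), neg_neg]
  have c2' : ρ1 * σ2⁻¹ = σ2 * ρ1 := by
    have := L1 (-1); simpa using this
  have c1'' : σ1 * ρ1 = ρ1 * σ1⁻¹ := by
    have := L2' 1; simpa using this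
  -- σ1 σ2 σ1 = σ2⁻¹
  have hs : σ1 * σ2 = ρ0 * ρ2 := by
    rw [hσ1, hσ2]
    calc ρ0 * ρ1 * (ρ1 * ρ2) = ρ0 * (ρ1 * ρ1) * ρ2 := by group
      _ = ρ0 * ρ2 := by rw [h1']; group
  have hs2 : (σ1 * σ2) * (σ1 * σ2) = 1 := by
    rw [hs, ← sq]; exact h02
  have L3 : σ1 * σ2 * σ1 = σ2⁻¹ := by
    have : σ1 * σ2 * σ1 * σ2 = 1 := by rw [mul_assoc (σ1 * σ2)]; exact hs2
    calc σ1 * σ2 * σ1 = (σ1 * σ2 * σ1 * σ2) * σ2⁻¹ := by group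
      _ = σ2⁻¹ := by rw [this, one_mul]
  -- EqA : ρ1-conjugate of hrel1
  have e1 : ρ1 * (σ2⁻¹ * σ1) * ρ1 = σ2 * σ1⁻¹ := by
    calc ρ1 * (σ2⁻¹ * σ1) * ρ1 = (ρ1 * σ2⁻¹) * (σ1 * ρ1) := by group
      _ = (σ2 * ρ1) * (ρ1 * σ1⁻¹) := by rw [c2', c1'']
      _ = σ2 * (ρ1 * ρ1) * σ1⁻¹ := by group
      _ = σ2 * σ1⁻¹ := by rw [h1']; group
  have e2 : ρ1 * (σ1 ^ i * ρ1 * σ2 ^ j) * ρ1 = σ1 ^ (-i) * ρ1 * σ2 ^ (-j) := by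
    calc ρ1 * (σ1 ^ i * ρ1 * σ2 ^ j) * ρ1 = (ρ1 * σ1 ^ i) * ρ1 * (σ2 ^ j * ρ1) := by group
      _ = (σ1 ^ (-i) * ρ1) * ρ1 * (ρ1 * σ2 ^ (-j)) := by rw [L2, L1']
      _ = σ1 ^ (-i) * ((ρ1 * ρ1) * ρ1) * σ2 ^ (-j) := by group
      _ = σ1 ^ (-i) * ρ1 * σ2 ^ (-j) := by rw [h1', one_mul]
  have EqA : σ2 * σ1⁻¹ = σ1 ^ (-i) * ρ1 * σ2 ^ (-j) := by
    rw [← e1, hrel1]; exact e2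
  have EqA' : σ1 ^ (-i) = σ2 * σ1⁻¹ * σ2 ^ j * ρ1 := by
    calc σ1 ^ (-i) = (σ1 ^ (-i) * ρ1 * σ2 ^ (-j)) * σ2 ^ j * ρ1⁻¹ := by group
      _ = (σ2 * σ1⁻¹) * σ2 ^ j * ρ1⁻¹ := by rw [← EqA]
      _ = σ2 * σ1⁻¹ * σ2 ^ j * ρ1 := by rw [hinv1]
  have EqB : σ1⁻¹ * σ2 = σ2 ^ (-j) * ρ1 * σ1 ^ (-i) := by
    calc σ1⁻¹ * σ2 = (σ2⁻¹ * σ1)⁻¹ := by group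
      _ = (σ1 ^ i * ρ1 * σ2 ^ j)⁻¹ := by rw [hrel1]
      _ = σ2 ^ (-j) * ρ1⁻¹ * σ1 ^ (-i) := by group
      _ = σ2 ^ (-j) * ρ1 * σ1 ^ (-i) := by rw [hinv1]
  -- the hint: conjugation by σ1 inverts σ2^(j+2)
  have L4 : σ1⁻¹ * σ2 ^ (j + 2) * σ1 = σ2 ^ (-(j + 2)) := by
    calc σ1⁻¹ * σ2 ^ (j + 2) * σ1 = (σ1⁻¹ * σ2) * σ2 ^ (j + 1) * σ1 := by group
      _ = (σ2 ^ (-j) * ρ1 * σ1 ^ (-i)) * σ2 ^ (j + 1) * σ1 := by rw [EqB]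
      _ = σ2 ^ (-j) * ρ1 * (σ2 * σ1⁻¹ * σ2 ^ j * ρ1) * σ2 ^ (j + 1) * σ1 := by rw [← EqA']
      _ = σ2 ^ (-j) * (ρ1 * σ2⁻¹⁻¹) * σ1⁻¹ * (σ2 ^ j * ρ1) * σ2 ^ (j + 1) * σ1 := by group
      _ = σ2 ^ (-j) * (σ2⁻¹ * ρ1) * σ1⁻¹ * (ρ1 * σ2 ^ (-j)) * σ2 ^ (j + 1) * σ1 := by
            rw [inv_inv, L1']
            have : ρ1 * σ2 = σ2⁻¹ * ρ1 := by
              have := L1 1; simpa using this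
            rw [this]
      _ = σ2 ^ (-j) * σ2⁻¹ * (ρ1 * σ1⁻¹) * ρ1 * (σ2 ^ (-j) * σ2 ^ (j + 1)) * σ1 := by group
      _ = σ2 ^ (-j) * σ2⁻¹ * (σ1 * ρ1) * ρ1 * (σ2 ^ (-j) * σ2 ^ (j + 1)) * σ1 := by rw [← c1'']
      _ = σ2 ^ (-j) * σ2⁻¹ * σ1 * (ρ1 * ρ1) * (σ2 ^ (-j) * σ2 ^ (j + 1)) * σ1 := by group
      _ = σ2 ^ (-j) * σ2⁻¹ * (σ1 * σ2 * σ1) := by rw [h1']; group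
      _ = σ2 ^ (-j) * σ2⁻¹ * σ2⁻¹ := by rw [L3]
      _ = σ2 ^ (-(j + 2)) := by group
  have L4cor : σ1 * σ2 ^ (-(j + 2)) = σ2 ^ (j + 2) * σ1 := by
    calc σ1 * σ2 ^ (-(j + 2)) = σ1 * (σ1⁻¹ * σ2 ^ (j + 2) * σ1) := by rw [L4]
      _ = σ2 ^ (j + 2) * σ1 := by group
  -- D from hrel2 and hrel1
  have hD0 : σ2⁻¹ * (σ1 ^ i * ρ1 * σ2 ^ j) = σ1 ^ a * σ2 ^ b := by
    rw [← hrel1, ← hrel2]; group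
  have D : σ1 ^ a * σ2 ^ (b - j) = σ2⁻¹ * σ1 ^ i * ρ1 := by
    calc σ1 ^ a * σ2 ^ (b - j) = (σ1 ^ a * σ2 ^ b) * σ2 ^ (-j) := by group
      _ = (σ2⁻¹ * (σ1 ^ i * ρ1 * σ2 ^ j)) * σ2 ^ (-j) := by rw [hD0]
      _ = σ2⁻¹ * σ1 ^ i * ρ1 := by group
  have hre1' : σ1 ^ i * ρ1 = σ2⁻¹ * σ1 * σ2 ^ (-j) := by
    calc σ1 ^ i * ρ1 = (σ1 ^ i * ρ1 * σ2 ^ j) * σ2 ^ (-j) := by group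
      _ = (σ2⁻¹ * σ1) * σ2 ^ (-j) := by rw [← hrel1]
  symm
  calc σ1 ^ (i - a) * ρ1 * σ2 ^ (b - j - 2)
      = σ1 ^ i * (σ1 ^ (-a) * ρ1) * σ2 ^ (b - j) * σ2 ^ (-2 : ℤ) := by group
    _ = σ1 ^ i * (ρ1 * σ1 ^ a) * σ2 ^ (b - j) * σ2 ^ (-2 : ℤ) := by rw [← L2]
    _ = σ1 ^ i * ρ1 * (σ1 ^ a * σ2 ^ (b - j)) * σ2 ^ (-2 : ℤ) := by group
    _ = σ1 ^ i * ρ1 * (σ2⁻¹ * σ1 ^ i * ρ1) * σ2 ^ (-2 : ℤ) := by rw [D]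
    _ = (σ1 ^ i * ρ1) * σ2⁻¹ * (σ1 ^ i * ρ1) * σ2 ^ (-2 : ℤ) := by group
    _ = (σ2⁻¹ * σ1 * σ2 ^ (-j)) * σ2⁻¹ * (σ2⁻¹ * σ1 * σ2 ^ (-j)) * σ2 ^ (-2 : ℤ) := by
          rw [hre1']
    _ = σ2⁻¹ * σ1 * σ2 ^ (-(j + 2)) * (σ1 * σ2 ^ (-(j + 2))) := by group
    _ = σ2⁻¹ * σ1 * σ2 ^ (-(j + 2)) * (σ2 ^ (j + 2) * σ1) := by rw [L4cor]
    _ = σ2⁻¹ * σ1 ^ 2 := by rw [sq]; group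
end

section
/- Let G be a group generated by involutions ρ₀, ρ₁, ρ₂ with (ρ₀ρ₂)² = 1, σ₁ = ρ₀ρ₁, σ₂ = ρ₁ρ₂. Suppose σ₂⁻¹σ₁ = σ₁^i ρ₁ σ₂^j and σ₂⁻²σ₁ = σ₁^a σ₂^b. Then σ₁ commutes with σ₂^(b-2). -/
theorem stmt_7 {G : Type*} [Group G] (ρ0 ρ1 ρ2 : G)
    (h0 : ρ0 ^ 2 = 1) (h1 : ρ1 ^ 2 = 1) (h2 : ρ2 ^ 2 = 1)
    (h02 : (ρ0 * ρ2) ^ 2 = 1)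
    (hgen : Subgroup.closure {ρ0, ρ1, ρ2} = ⊤)
    (σ1 σ2 : G) (hσ1 : σ1 = ρ0 * ρ1) (hσ2 : σ2 = ρ1 * ρ2)
    (i j a b : ℤ)
    (hrel1 : σ2⁻¹ * σ1 = σ1 ^ i * ρ1 * σ2 ^ j)
    (hrel2 : σ2⁻¹ ^ 2 * σ1 = σ1 ^ a * σ2 ^ b) :
    σ1 * σ2 ^ (b - 2) = σ2 ^ (b - 2) * σ1 := by
  have hρ1 : ρ1 * ρ1 = 1 := by rw [← sq]; exact h1
  have hρ1' : ρ1⁻¹ = ρ1 := by rw [inv_eq_iff_mul_eq_one]; exact hρ1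
  have h0' : ρ0⁻¹ = ρ0 := by rw [inv_eq_iff_mul_eq_one, ← sq]; exact h0
  have h2' : ρ2⁻¹ = ρ2 := by rw [inv_eq_iff_mul_eq_one, ← sq]; exact h2
  have hc : ∀ x : G, ρ1 * (ρ1 * x) = x := fun x => by rw [← mul_assoc, hρ1, one_mul]
  have k1 : ρ1 * σ1 * ρ1⁻¹ = σ1⁻¹ := by
    rw [hρ1', hσ1, mul_inv_rev, hρ1', h0']
    simp [mul_assoc, hρ1, hc]
  have k2 : ρ1 * σ2 * ρ1⁻¹ = σ2⁻¹ := by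
    rw [hρ1', hσ2, mul_inv_rev, hρ1', h2']
    simp [mul_assoc, hρ1, hc]
  have key := congrArg (MulAut.conj ρ1) hrel2
  simp only [map_mul, map_inv, map_pow, map_zpow, MulAut.conj_apply, k1, k2, inv_inv] at key
  -- key : σ2 ^ 2 * σ1⁻¹ = σ1⁻¹ ^ a * σ2⁻¹ ^ b
  calc σ1 * σ2 ^ (b - 2)
      = (σ2 ^ 2 * σ1⁻¹)⁻¹ * σ2 ^ b := by group
    _ = (σ1⁻¹ ^ a * σ2⁻¹ ^ b)⁻¹ * σ2 ^ b := by rw [key]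
    _ = σ2 ^ b * (σ1 ^ a * σ2 ^ b) := by group
    _ = σ2 ^ b * (σ2⁻¹ ^ 2 * σ1) := by rw [hrel2]
    _ = σ2 ^ (b - 2) * σ1 := by group
end

section
/- Let G be a group generated by involutions ρ₀, ρ₁, ρ₂ with (ρ₀ρ₂)² = 1, σ₁ = ρ₀ρ₁, σ₂ = ρ₁ρ₂. Suppose σ₂⁻¹σ₁ = σ₁^i ρ₁ σ₂^j and σ₂⁻²σ₁ = σ₁^a σ₂^b. Then conjugation by σ₂ inverts σ₁^(i-3-a), i.e. σ₂ σ₁^(i-3-a) σ₂⁻¹ = σ₁^(-(i-3-a)). -/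
set_option maxHeartbeats 1000000

theorem stmt_8 {G : Type*} [Group G] (ρ0 ρ1 ρ2 : G)
    (h0 : ρ0 ^ 2 = 1) (h1 : ρ1 ^ 2 = 1) (h2 : ρ2 ^ 2 = 1)
    (h02 : (ρ0 * ρ2) ^ 2 = 1)
    (hgen : Subgroup.closure {ρ0, ρ1, ρ2} = ⊤)
    (σ1 σ2 : G) (hσ1 : σ1 = ρ0 * ρ1) (hσ2 : σ2 = ρ1 * ρ2)
    (i j a b : ℤ)
    (hrel1 : σ2⁻¹ * σ1 = σ1 ^ i * ρ1 * σ2 ^ j)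
    (hrel2 : σ2⁻¹ ^ 2 * σ1 = σ1 ^ a * σ2 ^ b) :
    σ2 * σ1 ^ (i - 3 - a) * σ2⁻¹ = σ1 ^ (-(i - 3 - a)) := by
  -- basic involution facts
  have r0r0 : ρ0 * ρ0 = 1 := by rw [← pow_two]; exact h0
  have r1r1 : ρ1 * ρ1 = 1 := by rw [← pow_two]; exact h1
  have r2r2 : ρ2 * ρ2 = 1 := by rw [← pow_two]; exact h2
  have h02' : (ρ0 * ρ2) * (ρ0 * ρ2) = 1 := by rw [← pow_two]; exact h02
  have r1inv : ρ1⁻¹ = ρ1 := inv_eq_of_mul_eq_one_right r1r1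
  -- helpers
  have conjz : ∀ (u v : G) (k : ℤ), u * v ^ k * u⁻¹ = (u * v * u⁻¹) ^ k := fun u v k => by
    simpa using (MulAut.conj u).map_zpow v k
  have sqz : ∀ g : G, g * g = g ^ (2 : ℤ) := fun g => by
    rw [show (2 : ℤ) = 1 + 1 from rfl, zpow_add, zpow_one]
  -- dihedral-type relations
  have r0inv : ρ0⁻¹ = ρ0 := inv_eq_of_mul_eq_one_right r0r0
  have r2inv : ρ2⁻¹ = ρ2 := inv_eq_of_mul_eq_one_right r2r2
  have c02 : ρ0 * ρ2 = ρ2 * ρ0 := by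
    calc ρ0 * ρ2 = (ρ0 * ρ2)⁻¹ := (inv_eq_of_mul_eq_one_right h02').symm
      _ = ρ2⁻¹ * ρ0⁻¹ := by group
      _ = ρ2 * ρ0 := by rw [r2inv, r0inv]
  have key1 : (σ2 * σ1 * σ2) * σ1 = 1 := by
    calc (σ2 * σ1 * σ2) * σ1
        = ρ1 * (ρ2 * (ρ0 * ((ρ1 * ρ1) * (ρ2 * (ρ0 * ρ1))))) := by rw [hσ1, hσ2]; group
      _ = ρ1 * (((ρ2 * ρ0) * (ρ2 * ρ0)) * ρ1) := by rw [r1r1]; group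
      _ = ρ1 * (((ρ0 * ρ2) * (ρ0 * ρ2)) * ρ1) := by rw [← c02]
      _ = ρ1 * ρ1 := by rw [h02']; group
      _ = 1 := r1r1
  have sxs : σ2 * σ1 * σ2 = σ1⁻¹ := eq_inv_of_mul_eq_one_left key1
  have key2 : (ρ1 * σ1 * ρ1) * σ1 = 1 := by
    calc (ρ1 * σ1 * ρ1) * σ1
        = ρ1 * ρ0 * (ρ1 * ρ1) * (ρ0 * ρ1) := by rw [hσ1]; group
      _ = ρ1 * (ρ0 * ρ0) * ρ1 := by rw [r1r1]; group
      _ = ρ1 * ρ1 := by rw [r0r0]; group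
      _ = 1 := r1r1
  have rxr : ρ1 * σ1 * ρ1 = σ1⁻¹ := eq_inv_of_mul_eq_one_left key2
  have key3 : (ρ1 * σ2 * ρ1) * σ2 = 1 := by
    calc (ρ1 * σ2 * ρ1) * σ2
        = ρ1 * ρ1 * (ρ2 * (ρ1 * ρ1) * ρ2) := by rw [hσ2]; group
      _ = ρ1 * ρ1 * (ρ2 * ρ2) := by rw [r1r1]; group
      _ = ρ1 * ρ1 := by rw [r2r2]; group
      _ = 1 := r1r1
  have rsr : ρ1 * σ2 * ρ1 = σ2⁻¹ := eq_inv_of_mul_eq_one_left key3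
  -- conjugation by ρ1 on powers
  have rx : ∀ k : ℤ, ρ1 * σ1 ^ k * ρ1 = σ1 ^ (-k) := fun k => by
    calc ρ1 * σ1 ^ k * ρ1 = ρ1 * σ1 ^ k * ρ1⁻¹ := by rw [r1inv]
      _ = (ρ1 * σ1 * ρ1⁻¹) ^ k := by rw [conjz]
      _ = (σ1⁻¹) ^ k := by rw [show ρ1 * σ1 * ρ1⁻¹ = σ1⁻¹ from by rw [r1inv]; exact rxr]
      _ = σ1 ^ (-k) := by group
  have rsk : ∀ k : ℤ, ρ1 * σ2 ^ k * ρ1 = σ2 ^ (-k) := fun k => by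
    calc ρ1 * σ2 ^ k * ρ1 = ρ1 * σ2 ^ k * ρ1⁻¹ := by rw [r1inv]
      _ = (ρ1 * σ2 * ρ1⁻¹) ^ k := by rw [conjz]
      _ = (σ2⁻¹) ^ k := by rw [show ρ1 * σ2 * ρ1⁻¹ = σ2⁻¹ from by rw [r1inv]; exact rsr]
      _ = σ2 ^ (-k) := by group
  -- the key auxiliary element y = σ1⁻² σ2⁻² σ1
  set y : G := σ1 ^ (-2 : ℤ) * σ2 ^ (-2 : ℤ) * σ1 with hy
  have s2i : σ2 ^ (-2 : ℤ) = σ1 ^ (2 : ℤ) * y * σ1⁻¹ := by rw [hy]; group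
  have s2 : σ2 ^ (2 : ℤ) = σ1 * y⁻¹ * σ1 ^ (-2 : ℤ) := by rw [hy]; group
  have s2x : σ2⁻¹ ^ 2 * σ1 = σ1 ^ (2 : ℤ) * y := by rw [pow_two, hy]; group
  -- conjugation of σ1 by σ2
  have sxsi : σ2 * σ1 * σ2⁻¹ = σ1 * y * σ1⁻¹ := by
    calc σ2 * σ1 * σ2⁻¹ = (σ2 * σ1 * σ2) * σ2 ^ (-2 : ℤ) := by group
      _ = σ1⁻¹ * (σ1 ^ (2 : ℤ) * y * σ1⁻¹) := by rw [sxs, s2i]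
      _ = σ1 * y * σ1⁻¹ := by group
  have sxm : σ2 * σ1⁻¹ * σ2⁻¹ = σ1 * y⁻¹ * σ1⁻¹ := by
    calc σ2 * σ1⁻¹ * σ2⁻¹ = (σ2 * σ1 * σ2⁻¹)⁻¹ := by group
      _ = (σ1 * y * σ1⁻¹)⁻¹ := by rw [sxsi]
      _ = σ1 * y⁻¹ * σ1⁻¹ := by group
  have sxk : ∀ k : ℤ, σ2 * σ1 ^ k * σ2⁻¹ = σ1 * y ^ k * σ1⁻¹ := fun k => by
    calc σ2 * σ1 ^ k * σ2⁻¹ = (σ2 * σ1 * σ2⁻¹) ^ k := by rw [conjz]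
      _ = (σ1 * y * σ1⁻¹) ^ k := by rw [sxsi]
      _ = σ1 * y ^ k * σ1⁻¹ := by rw [← conjz]
  have isx : σ2⁻¹ * σ1 * σ2 = σ1 ^ (2 : ℤ) * y * σ1 ^ (-2 : ℤ) := by
    calc σ2⁻¹ * σ1 * σ2 = σ2 ^ (-2 : ℤ) * (σ2 * σ1 * σ2) := by group
      _ = (σ1 ^ (2 : ℤ) * y * σ1⁻¹) * σ1⁻¹ := by rw [s2i, sxs]
      _ = σ1 ^ (2 : ℤ) * y * σ1 ^ (-2 : ℤ) := by group
  -- hrel2 reformulation: σ2^b = σ1^(2-a) * y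
  have hb2 : σ1 ^ (2 : ℤ) * y = σ1 ^ a * σ2 ^ b := s2x.symm.trans hrel2
  have sb : σ2 ^ b = σ1 ^ (2 - a) * y := by
    calc σ2 ^ b = σ1 ^ (-a) * (σ1 ^ a * σ2 ^ b) := by group
      _ = σ1 ^ (-a) * (σ1 ^ (2 : ℤ) * y) := by rw [← hb2]
      _ = σ1 ^ (2 - a) * y := by group
  have sbi : σ2 ^ (-b) = y⁻¹ * σ1 ^ (a - 2) := by
    calc σ2 ^ (-b) = (σ2 ^ b)⁻¹ := by group
      _ = (σ1 ^ (2 - a) * y)⁻¹ := by rw [sb]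
      _ = y⁻¹ * σ1 ^ (a - 2) := by group
  -- hrel1 reformulation
  have rdef : ρ1 = σ1 ^ (-i) * σ2⁻¹ * σ1 * σ2 ^ (-j) := by
    calc ρ1 = σ1 ^ (-i) * ((σ1 ^ i * ρ1 * σ2 ^ j)) * σ2 ^ (-j) := by group
      _ = σ1 ^ (-i) * ((σ2⁻¹ * σ1)) * σ2 ^ (-j) := by rw [← hrel1]
      _ = σ1 ^ (-i) * σ2⁻¹ * σ1 * σ2 ^ (-j) := by group
  have rxc : ρ1 * σ1 = σ1⁻¹ * ρ1 := by
    calc ρ1 * σ1 = (ρ1 * σ1 * ρ1) * ρ1⁻¹ := by group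
      _ = σ1⁻¹ * ρ1⁻¹ := by rw [rxr]
      _ = σ1⁻¹ * ρ1 := by rw [r1inv]
  have eqT : σ1 ^ (-i) * σ2⁻¹ * σ1 * σ2 ^ (-j) * σ1
      = σ1⁻¹ * (σ1 ^ (-i) * σ2⁻¹ * σ1 * σ2 ^ (-j)) := by
    rw [← rdef]; exact rxc
  -- KEY STEP 1: conjugation by σ2^j sends σ1 to y⁻¹
  have T1 : σ2 ^ (-j) * σ1 = y⁻¹ * σ2 ^ (-j) := by
    calc σ2 ^ (-j) * σ1
        = σ1⁻¹ * σ2 * σ1 ^ i * (σ1 ^ (-i) * σ2⁻¹ * σ1 * σ2 ^ (-j) * σ1) := by group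
      _ = σ1⁻¹ * σ2 * σ1 ^ i * (σ1⁻¹ * (σ1 ^ (-i) * σ2⁻¹ * σ1 * σ2 ^ (-j))) := by rw [eqT]
      _ = σ1⁻¹ * (σ2 * σ1⁻¹ * σ2⁻¹) * (σ1 * σ2 ^ (-j)) := by group
      _ = σ1⁻¹ * (σ1 * y⁻¹ * σ1⁻¹) * (σ1 * σ2 ^ (-j)) := by rw [sxm]
      _ = y⁻¹ * σ2 ^ (-j) := by group
  have T1c : σ2 ^ (-j) * σ1 * (σ2 ^ (-j))⁻¹ = y⁻¹ := by
    calc σ2 ^ (-j) * σ1 * (σ2 ^ (-j))⁻¹ = (σ2 ^ (-j) * σ1) * (σ2 ^ (-j))⁻¹ := by group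
      _ = (y⁻¹ * σ2 ^ (-j)) * (σ2 ^ (-j))⁻¹ := by rw [T1]
      _ = y⁻¹ := by group
  have T1k : ∀ k : ℤ, σ2 ^ (-j) * σ1 ^ k = y ^ (-k) * σ2 ^ (-j) := fun k => by
    calc σ2 ^ (-j) * σ1 ^ k
        = (σ2 ^ (-j) * σ1 ^ k * (σ2 ^ (-j))⁻¹) * σ2 ^ (-j) := by group
      _ = ((σ2 ^ (-j) * σ1 * (σ2 ^ (-j))⁻¹) ^ k) * σ2 ^ (-j) := by rw [conjz]
      _ = (y⁻¹) ^ k * σ2 ^ (-j) := by rw [T1c]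
      _ = y ^ (-k) * σ2 ^ (-j) := by group
  have T1km2 : σ2 ^ (-j) * σ1 ^ (-2 : ℤ) = y ^ (2 : ℤ) * σ2 ^ (-j) := (T1k (-2)).trans (by group)
  have T1k2 : σ2 ^ (-j) * σ1 ^ (2 : ℤ) = y ^ (-2 : ℤ) * σ2 ^ (-j) := (T1k 2).trans (by group)
  -- conjugation of y by σ2^j
  have Tyj : σ2 ^ (-j) * y = y ^ (2 : ℤ) * σ2 ^ (-2 : ℤ) * y⁻¹ * σ2 ^ (-j) := by
    calc σ2 ^ (-j) * y
        = (σ2 ^ (-j) * σ1 ^ (-2 : ℤ)) * σ2 ^ (-2 : ℤ) * σ1 := by rw [hy]; group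
      _ = (y ^ (2 : ℤ) * σ2 ^ (-j)) * σ2 ^ (-2 : ℤ) * σ1 := by rw [T1km2]
      _ = y ^ (2 : ℤ) * σ2 ^ (-2 : ℤ) * (σ2 ^ (-j) * σ1) := by group
      _ = y ^ (2 : ℤ) * σ2 ^ (-2 : ℤ) * (y⁻¹ * σ2 ^ (-j)) := by rw [T1]
      _ = y ^ (2 : ℤ) * σ2 ^ (-2 : ℤ) * y⁻¹ * σ2 ^ (-j) := by group
  -- KEY STEP 2: σ2⁻¹ y = y⁻¹ σ2
  have w1 : σ2 ^ (-j) * (σ2⁻¹ * σ1 * σ2) = σ2⁻¹ * y⁻¹ * σ2 * σ2 ^ (-j) := by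
    calc σ2 ^ (-j) * (σ2⁻¹ * σ1 * σ2) = σ2⁻¹ * ((σ2 ^ (-j) * σ1)) * σ2 := by group
      _ = σ2⁻¹ * ((y⁻¹ * σ2 ^ (-j))) * σ2 := by rw [T1]
      _ = σ2⁻¹ * y⁻¹ * σ2 * σ2 ^ (-j) := by group
  have w2 : σ2 ^ (-j) * (σ2⁻¹ * σ1 * σ2) = σ2 ^ (-2 : ℤ) * y * σ2 ^ (-j) := by
    calc σ2 ^ (-j) * (σ2⁻¹ * σ1 * σ2)
        = σ2 ^ (-j) * (σ1 ^ (2 : ℤ) * y * σ1 ^ (-2 : ℤ)) := by rw [isx]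
      _ = (σ2 ^ (-j) * σ1 ^ (2 : ℤ)) * y * σ1 ^ (-2 : ℤ) := by group
      _ = (y ^ (-2 : ℤ) * σ2 ^ (-j)) * y * σ1 ^ (-2 : ℤ) := by rw [T1k2]
      _ = y ^ (-2 : ℤ) * (σ2 ^ (-j) * y) * σ1 ^ (-2 : ℤ) := by group
      _ = y ^ (-2 : ℤ) * (y ^ (2 : ℤ) * σ2 ^ (-2 : ℤ) * y⁻¹ * σ2 ^ (-j)) * σ1 ^ (-2 : ℤ) := by
          rw [Tyj]
      _ = σ2 ^ (-2 : ℤ) * y⁻¹ * (σ2 ^ (-j) * σ1 ^ (-2 : ℤ)) := by group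
      _ = σ2 ^ (-2 : ℤ) * y⁻¹ * (y ^ (2 : ℤ) * σ2 ^ (-j)) := by rw [T1km2]
      _ = σ2 ^ (-2 : ℤ) * y * σ2 ^ (-j) := by group
  have e3 : σ2⁻¹ * y⁻¹ * σ2 * σ2 ^ (-j) = σ2 ^ (-2 : ℤ) * y * σ2 ^ (-j) := w1.symm.trans w2
  have YS1 : σ2⁻¹ * y = y⁻¹ * σ2 := by
    calc σ2⁻¹ * y = σ2 * (σ2 ^ (-2 : ℤ) * y * σ2 ^ (-j)) * σ2 ^ j := by group
      _ = σ2 * (σ2⁻¹ * y⁻¹ * σ2 * σ2 ^ (-j)) * σ2 ^ j := by rw [← e3]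
      _ = y⁻¹ * σ2 := by group
  -- conjugation of y by σ2, two ways, giving FBAR
  have E1' : σ2 * y * σ2⁻¹ = σ2 ^ (2 : ℤ) * y⁻¹ := by
    calc σ2 * y * σ2⁻¹ = σ2 * (σ2 * (σ2⁻¹ * y)) * σ2⁻¹ := by group
      _ = σ2 * (σ2 * (y⁻¹ * σ2)) * σ2⁻¹ := by rw [YS1]
      _ = (σ2 * σ2) * y⁻¹ := by group
      _ = σ2 ^ (2 : ℤ) * y⁻¹ := by rw [sqz σ2]
  have E2' : σ2 * y * σ2⁻¹ = σ1 * y ^ (-2 : ℤ) * σ1 * y ^ (2 : ℤ) * σ1⁻¹ := by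
    calc σ2 * y * σ2⁻¹
        = (σ2 * σ1 ^ (-2 : ℤ) * σ2⁻¹) * σ2 ^ (-2 : ℤ) * (σ2 * σ1 * σ2⁻¹) := by rw [hy]; group
      _ = (σ1 * y ^ (-2 : ℤ) * σ1⁻¹) * σ2 ^ (-2 : ℤ) * (σ2 * σ1 * σ2⁻¹) := by rw [sxk]
      _ = (σ1 * y ^ (-2 : ℤ) * σ1⁻¹) * (σ1 ^ (2 : ℤ) * y * σ1⁻¹) * (σ1 * y * σ1⁻¹) := by
          rw [s2i, sxsi]
      _ = σ1 * y ^ (-2 : ℤ) * σ1 * (y * y) * σ1⁻¹ := by group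
      _ = σ1 * y ^ (-2 : ℤ) * σ1 * y ^ (2 : ℤ) * σ1⁻¹ := by rw [sqz y]
  have E12 : σ2 ^ (2 : ℤ) * y⁻¹ = σ1 * y ^ (-2 : ℤ) * σ1 * y ^ (2 : ℤ) * σ1⁻¹ :=
    E1'.symm.trans E2'
  have combined : σ1 * y⁻¹ * σ1 ^ (-2 : ℤ) * y⁻¹
      = σ1 * y ^ (-2 : ℤ) * σ1 * y ^ (2 : ℤ) * σ1⁻¹ := by
    calc σ1 * y⁻¹ * σ1 ^ (-2 : ℤ) * y⁻¹ = (σ1 * y⁻¹ * σ1 ^ (-2 : ℤ)) * y⁻¹ := by group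
      _ = σ2 ^ (2 : ℤ) * y⁻¹ := by rw [← s2]
      _ = σ1 * y ^ (-2 : ℤ) * σ1 * y ^ (2 : ℤ) * σ1⁻¹ := E12
  have FBAR : y * σ1 ^ (-2 : ℤ) * y⁻¹ = σ1 * y ^ (2 : ℤ) * σ1⁻¹ := by
    calc y * σ1 ^ (-2 : ℤ) * y⁻¹
        = y ^ (2 : ℤ) * (σ1⁻¹ * (σ1 * y⁻¹ * σ1 ^ (-2 : ℤ) * y⁻¹)) := by group
      _ = y ^ (2 : ℤ) * (σ1⁻¹ * (σ1 * y ^ (-2 : ℤ) * σ1 * y ^ (2 : ℤ) * σ1⁻¹)) := by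
          rw [combined]
      _ = σ1 * y ^ (2 : ℤ) * σ1⁻¹ := by group
  -- relation S1' from σ2 commuting with σ2^b
  have sconj : σ2 * (σ1 ^ (2 - a) * y) * σ2⁻¹ = σ1 ^ (2 - a) * y := by
    rw [← sb]; group
  have LHSexp : σ2 * (σ1 ^ (2 - a) * y) * σ2⁻¹ = σ1 * y ^ (1 - a) * σ1 ^ (-2 : ℤ) * y⁻¹ := by
    calc σ2 * (σ1 ^ (2 - a) * y) * σ2⁻¹
        = (σ2 * σ1 ^ (2 - a) * σ2⁻¹) * (σ2 * y * σ2⁻¹) := by group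
      _ = (σ1 * y ^ (2 - a) * σ1⁻¹) * (σ2 ^ (2 : ℤ) * y⁻¹) := by rw [sxk, E1']
      _ = (σ1 * y ^ (2 - a) * σ1⁻¹) * ((σ1 * y⁻¹ * σ1 ^ (-2 : ℤ)) * y⁻¹) := by rw [s2]
      _ = σ1 * y ^ (1 - a) * σ1 ^ (-2 : ℤ) * y⁻¹ := by group
  have Eq1 : σ1 * y ^ (1 - a) * σ1 ^ (-2 : ℤ) * y⁻¹ = σ1 ^ (2 - a) * y := LHSexp.symm.trans sconj
  have S1' : y ^ (1 - a) * σ1 ^ (-2 : ℤ) = σ1 ^ (1 - a) * y ^ (2 : ℤ) := by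
    calc y ^ (1 - a) * σ1 ^ (-2 : ℤ)
        = σ1⁻¹ * ((σ1 * y ^ (1 - a) * σ1 ^ (-2 : ℤ) * y⁻¹) * y) := by group
      _ = σ1⁻¹ * ((σ1 ^ (2 - a) * y) * y) := by rw [Eq1]
      _ = σ1⁻¹ * (σ1 ^ (2 - a) * (y * y)) := by group
      _ = σ1⁻¹ * (σ1 ^ (2 - a) * y ^ (2 : ℤ)) := by rw [sqz y]
      _ = σ1 ^ (1 - a) * y ^ (2 : ℤ) := by group
  -- relation S3 from σ2^j commuting with σ2^b
  have T1ka : σ2 ^ (-j) * σ1 ^ (2 - a) = y ^ (a - 2) * σ2 ^ (-j) := (T1k (2 - a)).trans (by group)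
  have Ej : σ1 ^ (2 - a) * y * σ2 ^ (-j)
      = y ^ a * (σ1 ^ (2 : ℤ) * y * σ1⁻¹) * y⁻¹ * σ2 ^ (-j) := by
    calc σ1 ^ (2 - a) * y * σ2 ^ (-j) = σ2 ^ b * σ2 ^ (-j) := by rw [← sb]
      _ = σ2 ^ (-j) * σ2 ^ b := by group
      _ = σ2 ^ (-j) * (σ1 ^ (2 - a) * y) := by rw [sb]
      _ = (σ2 ^ (-j) * σ1 ^ (2 - a)) * y := by group
      _ = (y ^ (a - 2) * σ2 ^ (-j)) * y := by rw [T1ka]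
      _ = y ^ (a - 2) * (σ2 ^ (-j) * y) := by group
      _ = y ^ (a - 2) * (y ^ (2 : ℤ) * σ2 ^ (-2 : ℤ) * y⁻¹ * σ2 ^ (-j)) := by rw [Tyj]
      _ = y ^ a * σ2 ^ (-2 : ℤ) * y⁻¹ * σ2 ^ (-j) := by group
      _ = y ^ a * (σ1 ^ (2 : ℤ) * y * σ1⁻¹) * y⁻¹ * σ2 ^ (-j) := by rw [s2i]
  have S3o : y ^ a * (σ1 ^ (2 : ℤ) * y * σ1⁻¹) * y⁻¹ = σ1 ^ (2 - a) * y := by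
    calc y ^ a * (σ1 ^ (2 : ℤ) * y * σ1⁻¹) * y⁻¹
        = (y ^ a * (σ1 ^ (2 : ℤ) * y * σ1⁻¹) * y⁻¹ * σ2 ^ (-j)) * σ2 ^ j := by group
      _ = (σ1 ^ (2 - a) * y * σ2 ^ (-j)) * σ2 ^ j := by rw [← Ej]
      _ = σ1 ^ (2 - a) * y := by group
  -- conjugation of y by ρ1
  have ry : ρ1 * y * ρ1 = σ1 ^ (3 : ℤ) * y⁻¹ * σ1 ^ (-3 : ℤ) := by
    calc ρ1 * y * ρ1
        = ρ1 * σ1 ^ (-2 : ℤ) * (ρ1 * ρ1) * σ2 ^ (-2 : ℤ) * (ρ1 * ρ1) * σ1 * ρ1 := by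
          rw [r1r1, hy]; group
      _ = (ρ1 * σ1 ^ (-2 : ℤ) * ρ1) * (ρ1 * σ2 ^ (-2 : ℤ) * ρ1) * (ρ1 * σ1 * ρ1) := by group
      _ = σ1 ^ (-(-2 : ℤ)) * σ2 ^ (-(-2 : ℤ)) * (ρ1 * σ1 * ρ1) := by rw [rx, rsk]
      _ = σ1 ^ (-(-2 : ℤ)) * σ2 ^ (-(-2 : ℤ)) * σ1⁻¹ := by rw [rxr]
      _ = σ1 ^ (2 : ℤ) * σ2 ^ (2 : ℤ) * σ1⁻¹ := by group
      _ = σ1 ^ (2 : ℤ) * (σ1 * y⁻¹ * σ1 ^ (-2 : ℤ)) * σ1⁻¹ := by rw [s2]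
      _ = σ1 ^ (3 : ℤ) * y⁻¹ * σ1 ^ (-3 : ℤ) := by group
  -- D' : y commutes with σ1^(a+1)
  have rb : σ2 ^ (-b) = σ1 ^ (a + 1) * y⁻¹ * σ1 ^ (-3 : ℤ) := by
    calc σ2 ^ (-b) = ρ1 * σ2 ^ b * ρ1 := (rsk b).symm
      _ = ρ1 * (σ1 ^ (2 - a) * y) * ρ1 := by rw [sb]
      _ = (ρ1 * σ1 ^ (2 - a) * ρ1) * (ρ1 * y * ρ1) := by
          rw [show (ρ1 * σ1 ^ (2 - a) * ρ1) * (ρ1 * y * ρ1)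
              = ρ1 * σ1 ^ (2 - a) * (ρ1 * ρ1) * y * ρ1 from by group, r1r1]; group
      _ = σ1 ^ (-(2 - a)) * (ρ1 * y * ρ1) := by rw [rx]
      _ = σ1 ^ (-(2 - a)) * (σ1 ^ (3 : ℤ) * y⁻¹ * σ1 ^ (-3 : ℤ)) := by rw [ry]
      _ = σ1 ^ (a + 1) * y⁻¹ * σ1 ^ (-3 : ℤ) := by group
  have Dp : y⁻¹ * σ1 ^ (a + 1) = σ1 ^ (a + 1) * y⁻¹ := by
    calc y⁻¹ * σ1 ^ (a + 1) = (y⁻¹ * σ1 ^ (a - 2)) * σ1 ^ (3 : ℤ) := by group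
      _ = σ2 ^ (-b) * σ1 ^ (3 : ℤ) := by rw [← sbi]
      _ = (σ1 ^ (a + 1) * y⁻¹ * σ1 ^ (-3 : ℤ)) * σ1 ^ (3 : ℤ) := by rw [rb]
      _ = σ1 ^ (a + 1) * y⁻¹ := by group
  have Dp' : σ1 ^ (a + 1) * y = y * σ1 ^ (a + 1) := by
    calc σ1 ^ (a + 1) * y = y * ((y⁻¹ * σ1 ^ (a + 1)) * y) := by group
      _ = y * ((σ1 ^ (a + 1) * y⁻¹) * y) := by rw [Dp]
      _ = y * σ1 ^ (a + 1) := by group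
  -- A1 : y^(i-2) = σ1^(2-i)
  have rsx : ρ1 * (σ2 ^ j * σ1 ^ (i - 1)) * ρ1 = σ2 ^ (-j) * σ1 ^ (-(i - 1)) := by
    calc ρ1 * (σ2 ^ j * σ1 ^ (i - 1)) * ρ1
        = (ρ1 * σ2 ^ j * ρ1) * (ρ1 * σ1 ^ (i - 1) * ρ1) := by
          rw [show (ρ1 * σ2 ^ j * ρ1) * (ρ1 * σ1 ^ (i - 1) * ρ1)
              = ρ1 * σ2 ^ j * (ρ1 * ρ1) * σ1 ^ (i - 1) * ρ1 from by group, r1r1]; group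
      _ = σ2 ^ (-j) * σ1 ^ (-(i - 1)) := by rw [rsk, rx]
  have T1ki : σ2 ^ (-j) * σ1 ^ (-(i - 1)) = y ^ (i - 1) * σ2 ^ (-j) :=
    (T1k (-(i - 1))).trans (by group)
  have A1pre : σ1 ^ (2 : ℤ) * y = σ1 ^ i * y ^ (i - 1) := by
    calc σ1 ^ (2 : ℤ) * y = σ2⁻¹ ^ 2 * σ1 := s2x.symm
      _ = σ2⁻¹ * (σ2⁻¹ * σ1) := by rw [pow_two]; group
      _ = σ2⁻¹ * (σ1 ^ i * ρ1 * σ2 ^ j) := by rw [hrel1]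
      _ = (σ2⁻¹ * σ1) * (σ1 ^ (i - 1) * ρ1 * σ2 ^ j) := by group
      _ = (σ1 ^ i * ρ1 * σ2 ^ j) * (σ1 ^ (i - 1) * ρ1 * σ2 ^ j) := by rw [hrel1]
      _ = σ1 ^ i * (ρ1 * (σ2 ^ j * σ1 ^ (i - 1)) * ρ1) * σ2 ^ j := by group
      _ = σ1 ^ i * (σ2 ^ (-j) * σ1 ^ (-(i - 1))) * σ2 ^ j := by rw [rsx]
      _ = σ1 ^ i * ((σ2 ^ (-j) * σ1 ^ (-(i - 1)))) * σ2 ^ j := by group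
      _ = σ1 ^ i * ((y ^ (i - 1) * σ2 ^ (-j))) * σ2 ^ j := by rw [T1ki]
      _ = σ1 ^ i * y ^ (i - 1) := by group
  have A1 : y ^ (i - 2) = σ1 ^ (2 - i) := by
    calc y ^ (i - 2) = σ1 ^ (-i) * (σ1 ^ i * y ^ (i - 1)) * y⁻¹ := by group
      _ = σ1 ^ (-i) * (σ1 ^ (2 : ℤ) * y) * y⁻¹ := by rw [← A1pre]
      _ = σ1 ^ (2 - i) := by group
  -- A4 via S3o, S1', Dp', FBAR
  have y1a : y ^ (1 - a) = σ1 ^ (1 - a) * y ^ (2 : ℤ) * σ1 ^ (2 : ℤ) := by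
    calc y ^ (1 - a) = (y ^ (1 - a) * σ1 ^ (-2 : ℤ)) * σ1 ^ (2 : ℤ) := by group
      _ = (σ1 ^ (1 - a) * y ^ (2 : ℤ)) * σ1 ^ (2 : ℤ) := by rw [S1']
      _ = σ1 ^ (1 - a) * y ^ (2 : ℤ) * σ1 ^ (2 : ℤ) := by group
  have ya1 : y ^ (a - 1) = σ1 ^ (-2 : ℤ) * y ^ (-2 : ℤ) * σ1 ^ (a - 1) := by
    calc y ^ (a - 1) = (y ^ (1 - a))⁻¹ := by group
      _ = (σ1 ^ (1 - a) * y ^ (2 : ℤ) * σ1 ^ (2 : ℤ))⁻¹ := by rw [y1a]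
      _ = σ1 ^ (-2 : ℤ) * y ^ (-2 : ℤ) * σ1 ^ (a - 1) := by group
  have bigchain : σ1 ^ (2 - a) * y = σ1 * y ^ (2 : ℤ) * σ1 ^ (a - 1) * y⁻¹ := by
    calc σ1 ^ (2 - a) * y = y ^ a * (σ1 ^ (2 : ℤ) * y * σ1⁻¹) * y⁻¹ := S3o.symm
      _ = y * (y ^ (a - 1)) * (σ1 ^ (2 : ℤ) * y * σ1⁻¹) * y⁻¹ := by group
      _ = y * (σ1 ^ (-2 : ℤ) * y ^ (-2 : ℤ) * σ1 ^ (a - 1)) * (σ1 ^ (2 : ℤ) * y * σ1⁻¹) * y⁻¹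
          := by rw [ya1]
      _ = y * σ1 ^ (-2 : ℤ) * y ^ (-2 : ℤ) * (σ1 ^ (a + 1) * y) * σ1⁻¹ * y⁻¹ := by group
      _ = y * σ1 ^ (-2 : ℤ) * y ^ (-2 : ℤ) * (y * σ1 ^ (a + 1)) * σ1⁻¹ * y⁻¹ := by rw [Dp']
      _ = (y * σ1 ^ (-2 : ℤ) * y⁻¹) * (σ1 ^ a * y⁻¹) := by group
      _ = (σ1 * y ^ (2 : ℤ) * σ1⁻¹) * (σ1 ^ a * y⁻¹) := by rw [FBAR]
      _ = σ1 * y ^ (2 : ℤ) * σ1 ^ (a - 1) * y⁻¹ := by group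
  have A4 : σ1 * y ^ (2 : ℤ) * σ1 ^ (a - 1) = σ1 ^ (2 - a) * y ^ (2 : ℤ) := by
    calc σ1 * y ^ (2 : ℤ) * σ1 ^ (a - 1)
        = (σ1 * y ^ (2 : ℤ) * σ1 ^ (a - 1) * y⁻¹) * y := by group
      _ = (σ1 ^ (2 - a) * y) * y := by rw [← bigchain]
      _ = σ1 ^ (2 - a) * (y * y) := by group
      _ = σ1 ^ (2 - a) * y ^ (2 : ℤ) := by rw [sqz y]
  have A4' : y ^ (2 : ℤ) * σ1 ^ (a - 1) = σ1 ^ (1 - a) * y ^ (2 : ℤ) := by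
    calc y ^ (2 : ℤ) * σ1 ^ (a - 1) = σ1⁻¹ * (σ1 * y ^ (2 : ℤ) * σ1 ^ (a - 1)) := by group
      _ = σ1⁻¹ * (σ1 ^ (2 - a) * y ^ (2 : ℤ)) := by rw [A4]
      _ = σ1 ^ (1 - a) * y ^ (2 : ℤ) := by group
  have combo : y ^ (2 : ℤ) * σ1 ^ (a - 1) = y ^ (1 - a) * σ1 ^ (-2 : ℤ) := A4'.trans S1'.symm
  have A2 : y ^ (a + 1) = σ1 ^ (-(a + 1)) := by
    calc y ^ (a + 1) = y ^ (a - 1) * (y ^ (2 : ℤ) * σ1 ^ (a - 1)) * σ1 ^ (1 - a) := by group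
      _ = y ^ (a - 1) * (y ^ (1 - a) * σ1 ^ (-2 : ℤ)) * σ1 ^ (1 - a) := by rw [combo]
      _ = σ1 ^ (-(a + 1)) := by group
  -- conclusion
  have ym : y ^ (i - 3 - a) = σ1 ^ (-(i - 3 - a)) := by
    calc y ^ (i - 3 - a) = y ^ (i - 2) * (y ^ (a + 1))⁻¹ := by group
      _ = σ1 ^ (2 - i) * (σ1 ^ (-(a + 1)))⁻¹ := by rw [A1, A2]
      _ = σ1 ^ (-(i - 3 - a)) := by group
  calc σ2 * σ1 ^ (i - 3 - a) * σ2⁻¹ = σ1 * y ^ (i - 3 - a) * σ1⁻¹ := sxk (i - 3 - a)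
    _ = σ1 * σ1 ^ (-(i - 3 - a)) * σ1⁻¹ := by rw [ym]
    _ = σ1 ^ (-(i - 3 - a)) := by group
end

section
/- Let Γ = ⟨ρ₀, ρ₁, ρ₂⟩ be a rank-3 string C-group (each ρ_i an involution, (ρ₀ρ₂)² = 1, satisfying the intersection condition Γ_I ∩ Γ_J = Γ_{I∩J} for all subsets I, J of {0,1,2}, where Γ_I = ⟨ρ_i : i ∈ I⟩). Let N = ⟨(ρ₀ρ₁)^k⟩ for some k ≥ 2 and suppose N is normal in Γ. Then in Γ/N, the images of ⟨ρ₀, ρ₁⟩ and ⟨ρ₁, ρ₂⟩ intersect in the subgroup generated by the image of ρ₁. -/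
/-- In the quotient of a rank-3 string C-group by a normal subgroup generated by
`(ρ₀ρ₁)^k`, the images of `⟨ρ₀, ρ₁⟩` and `⟨ρ₁, ρ₂⟩` intersect in the subgroup
generated by the image of `ρ₁`. -/
theorem stmt_9 {G : Type*} [Group G] (ρ : Fin 3 → G)
    (hinv : ∀ t, (ρ t) ^ 2 = 1) (h02 : (ρ 0 * ρ 2) ^ 2 = 1)
    (hgen : Subgroup.closure (Set.range ρ) = ⊤)
    (hint : ∀ I J : Set (Fin 3),
      Subgroup.closure (ρ '' I) ⊓ Subgroup.closure (ρ '' J) =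
        Subgroup.closure (ρ '' (I ∩ J)))
    (k : ℕ) (hk : 2 ≤ k)
    (N : Subgroup G) (hN : N = Subgroup.zpowers ((ρ 0 * ρ 1) ^ k))
    [hnorm : N.Normal] :
    Subgroup.closure {QuotientGroup.mk' N (ρ 0), QuotientGroup.mk' N (ρ 1)} ⊓
      Subgroup.closure {QuotientGroup.mk' N (ρ 1), QuotientGroup.mk' N (ρ 2)} =
    Subgroup.closure {QuotientGroup.mk' N (ρ 1)} := by
  set π := QuotientGroup.mk' N with hπ
  set A := Subgroup.closure ({ρ 0, ρ 1} : Set G) with hAdef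
  set B := Subgroup.closure ({ρ 1, ρ 2} : Set G) with hBdef
  have hIJ : ({0, 1} ∩ {1, 2} : Set (Fin 3)) = {1} := by
    ext x; fin_cases x <;> simp
  have hAB : A ⊓ B = Subgroup.closure ({ρ 1} : Set G) := by
    have h := hint {0, 1} {1, 2}
    rw [hIJ] at h
    simpa [Set.image_insert_eq, hAdef, hBdef] using h
  have hNA : N ≤ A := by
    rw [hN, Subgroup.zpowers_le]
    exact pow_mem (mul_mem (Subgroup.subset_closure (by simp))
      (Subgroup.subset_closure (by simp))) k
  have hmap : ∀ s : Set G, Subgroup.closure (π '' s) = (Subgroup.closure s).map π :=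
    fun s => (MonoidHom.map_closure π s).symm
  have e1 : ({π (ρ 0), π (ρ 1)} : Set (G ⧸ N)) = π '' {ρ 0, ρ 1} := by
    simp [Set.image_insert_eq]
  have e2 : ({π (ρ 1), π (ρ 2)} : Set (G ⧸ N)) = π '' {ρ 1, ρ 2} := by
    simp [Set.image_insert_eq]
  have e3 : ({π (ρ 1)} : Set (G ⧸ N)) = π '' {ρ 1} := by simp
  rw [e1, e2, e3, hmap, hmap, hmap, ← hAB]
  apply le_antisymm
  · intro x hx
    rw [Subgroup.mem_inf] at hx
    obtain ⟨⟨a, ha, rfl⟩, ⟨b, hb, hab⟩⟩ := hx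
    have hmem : a⁻¹ * b ∈ N := by
      have : (a : G ⧸ N) = b := by
        simpa [hπ] using hab.symm
      exact QuotientGroup.eq.mp this
    have hbA : b ∈ A := by
      have : a * (a⁻¹ * b) ∈ A := mul_mem ha (hNA hmem)
      simpa using this
    exact ⟨b, ⟨hbA, hb⟩, hab⟩
  · exact le_inf (Subgroup.map_mono inf_le_left) (Subgroup.map_mono inf_le_right)
end

section
/- Let G = ⟨ρ₀, ρ₁, ρ₂⟩ with each ρ_i an involution and (ρ₀ρ₂)² = 1; let σ₁ = ρ₀ρ₁ and σ₂ = ρ₁ρ₂. Suppose N = ⟨σ₁^m⟩ is a normal subgroup of G. If the quotient G/N is tight (i.e., every element of G/N is the image of some σ₁^i ρ₁^j σ₂^k), then G itself is tight, i.e., G = ⟨σ₁⟩⟨ρ₁⟩⟨σ₂⟩. -/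
/-- If `N = ⟨σ₁^m⟩` is normal in the sggi `G` and `G/N` is tight, then `G` is tight. -/
theorem stmt_10 {G : Type*} [Group G] (ρ0 ρ1 ρ2 : G)
    (h0 : ρ0 ^ 2 = 1) (h1 : ρ1 ^ 2 = 1) (h2 : ρ2 ^ 2 = 1)
    (h02 : (ρ0 * ρ2) ^ 2 = 1)
    (hgen : Subgroup.closure {ρ0, ρ1, ρ2} = ⊤)
    (σ1 σ2 : G) (hσ1 : σ1 = ρ0 * ρ1) (hσ2 : σ2 = ρ1 * ρ2)
    (m : ℤ)
    (N : Subgroup G) (hN : N = Subgroup.zpowers (σ1 ^ m))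
    [hnorm : N.Normal]
    (htight : ∀ x : G ⧸ N, ∃ (i k : ℤ) (e : ℕ), e ≤ 1 ∧
      x = QuotientGroup.mk' N (σ1 ^ i * ρ1 ^ e * σ2 ^ k)) :
    ∀ g : G, ∃ (i k : ℤ) (e : ℕ), e ≤ 1 ∧ g = σ1 ^ i * ρ1 ^ e * σ2 ^ k := by
  have hρ1 : ρ1 * ρ1 = 1 := by rw [← sq]; exact h1
  have hρ0 : ρ0 * ρ0 = 1 := by rw [← sq]; exact h0
  have hinv1 : ρ1⁻¹ = ρ1 := inv_eq_of_mul_eq_one_right hρ1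
  have hc : ρ1 * σ1 * ρ1⁻¹ = σ1⁻¹ := by
    rw [hinv1, hσ1, mul_inv_rev, inv_eq_of_mul_eq_one_right hρ1,
      inv_eq_of_mul_eq_one_right hρ0]
    simp [mul_assoc, hρ1]
  have hswap : ∀ n : ℤ, ρ1 * σ1 ^ n = σ1 ^ (-n) * ρ1 := by
    intro n
    have h := conj_zpow (i := n) (a := ρ1) (b := σ1)
    rw [hc, inv_zpow'] at h
    calc ρ1 * σ1 ^ n = (ρ1 * σ1 ^ n * ρ1⁻¹) * ρ1 := by group
      _ = σ1 ^ (-n) * ρ1 := by rw [← h]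
  intro g
  obtain ⟨i, k, e, he, hx⟩ := htight (QuotientGroup.mk' N g)
  rw [QuotientGroup.mk'_eq_mk'] at hx
  obtain ⟨z, hzN, hz⟩ := hx
  have hz1 : g = σ1 ^ i * ρ1 ^ e * σ2 ^ k * z⁻¹ := by rw [← hz]; group
  have hconjN : σ2 ^ k * z⁻¹ * (σ2 ^ k)⁻¹ ∈ N := hnorm.conj_mem _ (N.inv_mem hzN) _
  rw [hN, Subgroup.mem_zpowers_iff] at hconjN
  obtain ⟨u, hu⟩ := hconjN
  have hzeq : z⁻¹ = (σ2 ^ k)⁻¹ * σ1 ^ (m * u) * σ2 ^ k := by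
    rw [zpow_mul, hu]; group
  have hg : g = σ1 ^ i * ρ1 ^ e * σ1 ^ (m * u) * σ2 ^ k := by
    rw [hz1, hzeq]; group
  interval_cases e
  · exact ⟨i + m * u, k, 0, Nat.zero_le 1, by rw [hg]; group⟩
  · refine ⟨i + -(m * u), k, 1, le_refl 1, ?_⟩
    rw [hg, pow_one, mul_assoc (σ1 ^ i), hswap, zpow_add]
    group
end

section
/- Let G = ⟨ρ₀, ρ₁, ρ₂⟩ with each ρ_i an involution and (ρ₀ρ₂)² = 1; σ₁ = ρ₀ρ₁, σ₂ = ρ₁ρ₂. Suppose σ₂⁻¹σ₁ = σ₁^i ρ₁ σ₂^j and σ₂⁻²σ₁ = σ₁^a σ₂^b hold. Then σ₂^(b-2) = σ₂^(2-b), i.e. σ₂^(2b-4) = 1. -/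
theorem stmt_17 {G : Type*} [Group G] (ρ0 ρ1 ρ2 : G)
    (h0 : ρ0 ^ 2 = 1) (h1 : ρ1 ^ 2 = 1) (h2 : ρ2 ^ 2 = 1)
    (h02 : (ρ0 * ρ2) ^ 2 = 1)
    (hgen : Subgroup.closure {ρ0, ρ1, ρ2} = ⊤)
    (σ1 σ2 : G) (hσ1 : σ1 = ρ0 * ρ1) (hσ2 : σ2 = ρ1 * ρ2)
    (i j a b : ℤ)
    (hrel1 : σ2⁻¹ * σ1 = σ1 ^ i * ρ1 * σ2 ^ j)
    (hrel2 : σ2⁻¹ ^ 2 * σ1 = σ1 ^ a * σ2 ^ b) :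
    σ2 ^ (b - 2) = σ2 ^ (2 - b) ∧ σ2 ^ (2 * b - 4) = 1 := by
  have hρ1 : ρ1 * ρ1 = 1 := by rw [← sq]; exact h1
  have hρ0 : ρ0 * ρ0 = 1 := by rw [← sq]; exact h0
  have hρ2 : ρ2 * ρ2 = 1 := by rw [← sq]; exact h2
  have iρ1 : ρ1⁻¹ = ρ1 := by rw [inv_eq_iff_mul_eq_one]; exact hρ1
  have iρ0 : ρ0⁻¹ = ρ0 := by rw [inv_eq_iff_mul_eq_one]; exact hρ0
  have iρ2 : ρ2⁻¹ = ρ2 := by rw [inv_eq_iff_mul_eq_one]; exact hρ2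
  -- conjugation by ρ1 inverts σ1 and σ2
  have cσ1 : ρ1 * σ1 * ρ1 = σ1⁻¹ := by
    rw [hσ1, mul_inv_rev, iρ0, iρ1]
    calc ρ1 * (ρ0 * ρ1) * ρ1 = ρ1 * ρ0 * (ρ1 * ρ1) := by group
    _ = ρ1 * ρ0 := by rw [hρ1, mul_one]
  have cσ2 : ρ1 * σ2 * ρ1 = σ2⁻¹ := by
    rw [hσ2, mul_inv_rev, iρ1, iρ2]
    calc ρ1 * (ρ1 * ρ2) * ρ1 = (ρ1 * ρ1) * (ρ2 * ρ1) := by group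
    _ = ρ2 * ρ1 := by rw [hρ1, one_mul]
  have cσ1k : ∀ k : ℤ, ρ1 * σ1 ^ k * ρ1 = σ1 ^ (-k) := by
    intro k
    have h : ρ1 * σ1 ^ k * ρ1 = (ρ1 * σ1 * ρ1⁻¹) ^ k := by
      rw [conj_zpow, iρ1]
    rw [h, iρ1, cσ1, inv_zpow, zpow_neg]
  have cσ2k : ∀ k : ℤ, ρ1 * σ2 ^ k * ρ1 = σ2 ^ (-k) := by
    intro k
    have h : ρ1 * σ2 ^ k * ρ1 = (ρ1 * σ2 * ρ1⁻¹) ^ k := by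
      rw [conj_zpow, iρ1]
    rw [h, iρ1, cσ2, inv_zpow, zpow_neg]
  -- (*) : basic relation in convenient form
  have star : σ2⁻¹ * σ2⁻¹ * σ1 = σ1 ^ a * σ2 ^ b := by
    rw [← hrel2]; group
  -- σ1 in terms of the others
  have hσ1eq : σ1 = σ2 * (σ2 * (σ1 ^ a * σ2 ^ b)) := by
    rw [← star]; group
  have hρ1' : ∀ x : G, ρ1 * (ρ1 * x) = x := by
    intro x; rw [← mul_assoc, hρ1, one_mul]
  -- conjugate star by ρ1 :  σ2 * σ2 * σ1⁻¹ = σ1 ^ (-a) * σ2 ^ (-b)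
  have starstar : σ2 * σ2 * σ1⁻¹ = σ1 ^ (-a) * σ2 ^ (-b) := by
    calc σ2 * σ2 * σ1⁻¹
        = (ρ1 * σ2⁻¹ * ρ1) * (ρ1 * σ2⁻¹ * ρ1) * (ρ1 * σ1 * ρ1) := by
          rw [cσ1]
          have : ρ1 * σ2⁻¹ * ρ1 = σ2 := by
            have := cσ2k (-1)
            simpa [zpow_neg_one, zpow_one] using this
          rw [this]
      _ = ρ1 * (σ2⁻¹ * σ2⁻¹ * σ1) * ρ1 := by
          simp only [mul_assoc, hρ1']
      _ = ρ1 * (σ1 ^ a * σ2 ^ b) * ρ1 := by rw [star]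
      _ = (ρ1 * σ1 ^ a * ρ1) * (ρ1 * σ2 ^ b * ρ1) := by
          simp only [mul_assoc, hρ1']
      _ = σ1 ^ (-a) * σ2 ^ (-b) := by rw [cσ1k, cσ2k]
  -- inverse of starstar
  have hinv : σ1 * (σ2⁻¹ * σ2⁻¹) = σ2 ^ b * σ1 ^ a := by
    calc σ1 * (σ2⁻¹ * σ2⁻¹) = (σ2 * σ2 * σ1⁻¹)⁻¹ := by group
      _ = (σ1 ^ (-a) * σ2 ^ (-b))⁻¹ := by rw [starstar]
      _ = σ2 ^ b * σ1 ^ a := by group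
  -- σ1^a commutes with σ2^(b-2)
  have comma : σ1 ^ a * σ2 ^ (b - 2) = σ2 ^ (b - 2) * σ1 ^ a := by
    have e1 : σ2 * σ2 * (σ1 ^ a * σ2 ^ (b - 2)) = σ1 * (σ2⁻¹ * σ2⁻¹) := by
      calc σ2 * σ2 * (σ1 ^ a * σ2 ^ (b - 2))
          = σ2 * (σ2 * (σ1 ^ a * σ2 ^ b)) * σ2⁻¹ * σ2⁻¹ := by group
        _ = σ1 * σ2⁻¹ * σ2⁻¹ := by rw [← hσ1eq]
        _ = σ1 * (σ2⁻¹ * σ2⁻¹) := by group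
    have e2 : σ2 * σ2 * (σ2 ^ (b - 2) * σ1 ^ a) = σ1 * (σ2⁻¹ * σ2⁻¹) := by
      calc σ2 * σ2 * (σ2 ^ (b - 2) * σ1 ^ a) = σ2 ^ b * σ1 ^ a := by group
        _ = σ1 * (σ2⁻¹ * σ2⁻¹) := hinv.symm
    exact mul_left_cancel (e1.trans e2.symm)
  -- σ1 commutes with σ2^(b-2)
  have comm1 : Commute σ1 (σ2 ^ (b - 2)) := by
    show σ1 * σ2 ^ (b - 2) = σ2 ^ (b - 2) * σ1
    have A : σ1 * σ2 ^ (b - 2) = (σ2 * (σ2 * (σ1 ^ a * σ2 ^ b))) * σ2 ^ (b - 2) :=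
      congrArg (· * σ2 ^ (b - 2)) hσ1eq
    calc σ1 * σ2 ^ (b - 2)
        = (σ2 * (σ2 * (σ1 ^ a * σ2 ^ b))) * σ2 ^ (b - 2) := A
      _ = σ2 * σ2 * (σ1 ^ a * σ2 ^ (b - 2)) * σ2 ^ b := by group
      _ = σ2 * σ2 * (σ2 ^ (b - 2) * σ1 ^ a) * σ2 ^ b := by rw [comma]
      _ = σ2 ^ (b - 2) * (σ2 * (σ2 * (σ1 ^ a * σ2 ^ b))) := by group
      _ = σ2 ^ (b - 2) * σ1 := by rw [← hσ1eq]
  have commi : Commute (σ1 ^ i) (σ2 ^ (b - 2)) := comm1.zpow_left i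
  -- conjugate σ2^(b-2) by w = σ2⁻¹σ1 in two ways
  have E1 : (σ2⁻¹ * σ1) * σ2 ^ (b - 2) * (σ2⁻¹ * σ1)⁻¹ = σ2 ^ (b - 2) := by
    calc (σ2⁻¹ * σ1) * σ2 ^ (b - 2) * (σ2⁻¹ * σ1)⁻¹
        = σ2⁻¹ * (σ1 * σ2 ^ (b - 2)) * σ1⁻¹ * σ2 := by group
      _ = σ2⁻¹ * (σ2 ^ (b - 2) * σ1) * σ1⁻¹ * σ2 := by rw [comm1.eq]
      _ = σ2 ^ (b - 2) := by group
  have E2 : (σ2⁻¹ * σ1) * σ2 ^ (b - 2) * (σ2⁻¹ * σ1)⁻¹ = σ2 ^ (2 - b) := by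
    rw [hrel1]
    calc (σ1 ^ i * ρ1 * σ2 ^ j) * σ2 ^ (b - 2) * (σ1 ^ i * ρ1 * σ2 ^ j)⁻¹
        = σ1 ^ i * (ρ1 * σ2 ^ (b - 2) * ρ1⁻¹) * (σ1 ^ i)⁻¹ := by group
      _ = σ1 ^ i * (ρ1 * σ2 ^ (b - 2) * ρ1) * (σ1 ^ i)⁻¹ := by rw [iρ1]
      _ = σ1 ^ i * σ2 ^ (-(b - 2)) * (σ1 ^ i)⁻¹ := by rw [cσ2k]
      _ = σ1 ^ i * (σ2 ^ (b - 2))⁻¹ * (σ1 ^ i)⁻¹ := by rw [zpow_neg]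
      _ = (σ2 ^ (b - 2))⁻¹ * σ1 ^ i * (σ1 ^ i)⁻¹ := by rw [commi.inv_right.eq]
      _ = σ2 ^ (2 - b) := by group
  have main : σ2 ^ (b - 2) = σ2 ^ (2 - b) := by rw [← E1, E2]
  refine ⟨main, ?_⟩
  calc σ2 ^ (2 * b - 4) = σ2 ^ (b - 2) * σ2 ^ (b - 2) := by group
    _ = σ2 ^ (2 - b) * σ2 ^ (b - 2) := by rw [main]
    _ = 1 := by group
end
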